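/- arXiv:2109.11537 — 6 statements merged into one kernel-verified Lean document; each statement's English description precedes it below -/
import Mathlib

section
/- Let y, τ ∈ ℝⁿ with 0 < τ_i ≤ 1 and y_i² ≤ τ_i · ‖y‖₂² for all i ∈ [n]. Let h ≥ 1 and set p_i = h·√τ_i. Let 1 ≤ q ≤ 2, let S ⊆ [n] and S̄ = [n] \ S be such that ‖y_{S̄}‖₂ ≥ 1/2 and |y_i| ≤ 1 for all i ∈ S. Then there is an absolute constant c̄ (one may take c̄ = 8) such that Σ_{i∈S̄} (1/p_i)·|y_i|^{2q} + Σ_{i∈S} (1/p_i)·y_i⁴ ≤ (c̄/h)·(‖y_{S̄}‖_q^q + ‖y_S‖₂²)². -/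
open Finset

/-- Subadditivity of `x ↦ x ^ p` on nonnegative reals for `0 ≤ p ≤ 1`. -/
lemma aux_rpow_add_le {a b p : ℝ} (ha : 0 ≤ a) (hb : 0 ≤ b) (hp : 0 ≤ p) (hp1 : p ≤ 1) :
    (a + b) ^ p ≤ a ^ p + b ^ p := by
  have h := NNReal.rpow_add_le_add_rpow (⟨a, ha⟩ : NNReal) (⟨b, hb⟩ : NNReal) hp hp1
  have h' := NNReal.coe_le_coe.mpr h
  exact Real.rpow_add_le_add_rpow ha hb hp hp1

/-- Subadditivity over finite sums. -/
lemma aux_rpow_sum_le {ι : Type*} (s : Finset ι) (f : ι → ℝ) (p : ℝ)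
    (hf : ∀ i ∈ s, 0 ≤ f i) (hp : 0 < p) (hp1 : p ≤ 1) :
    (∑ i ∈ s, f i) ^ p ≤ ∑ i ∈ s, f i ^ p := by
  induction s using Finset.cons_induction with
  | empty => simp [Real.zero_rpow hp.ne']
  | cons a s ha ih =>
      rw [Finset.sum_cons, Finset.sum_cons]
      have hfa : 0 ≤ f a := hf a (Finset.mem_cons_self a s)
      have hfs : ∀ i ∈ s, 0 ≤ f i := fun i hi => hf i (Finset.mem_cons_of_mem hi)
      have hsum : 0 ≤ ∑ i ∈ s, f i := Finset.sum_nonneg hfs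
      calc (f a + ∑ i ∈ s, f i) ^ p ≤ f a ^ p + (∑ i ∈ s, f i) ^ p :=
            aux_rpow_add_le hfa hsum hp.le hp1
        _ ≤ f a ^ p + ∑ i ∈ s, f i ^ p := by
            exact add_le_add_right (ih hfs) _

set_option maxHeartbeats 1000000 in
/-- second-moment bound for sampling with square roots of leverage-score-type
uniformity weights.  There is an absolute constant `c̄` (one may take `c̄ = 8`) such that
for all `y, τ` with `0 < τ_i ≤ 1`, `y_i² ≤ τ_i‖y‖₂²`, `h ≥ 1`, `p_i = h√τ_i`, `1 ≤ q ≤ 2`,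
`S ⊆ [n]` with `‖y_{S̄}‖₂ ≥ 1/2` and `|y_i| ≤ 1` on `S`:
`Σ_{i∈S̄} (1/p_i)|y_i|^{2q} + Σ_{i∈S} (1/p_i)y_i⁴ ≤ (c̄/h)(‖y_{S̄}‖_q^q + ‖y_S‖₂²)²`. -/
theorem stmt1 :
    ∃ cbar : ℝ, 0 < cbar ∧
      ∀ (n : ℕ) (y τ : Fin n → ℝ),
        (∀ i, 0 < τ i) → (∀ i, τ i ≤ 1) →
        (∀ i, (y i) ^ 2 ≤ τ i * ∑ j, (y j) ^ 2) →
        ∀ h : ℝ, 1 ≤ h →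
        ∀ q : ℝ, 1 ≤ q → q ≤ 2 →
        ∀ S : Finset (Fin n),
          (1 : ℝ) / 2 ≤ Real.sqrt (∑ i ∈ Sᶜ, (y i) ^ 2) →
          (∀ i ∈ S, |y i| ≤ 1) →
          (∑ i ∈ Sᶜ, (1 / (h * Real.sqrt (τ i))) * |y i| ^ (2 * q))
              + ∑ i ∈ S, (1 / (h * Real.sqrt (τ i))) * (y i) ^ 4
            ≤ (cbar / h) * ((∑ i ∈ Sᶜ, |y i| ^ q) + ∑ i ∈ S, (y i) ^ 2) ^ 2 := by
  refine ⟨8, by norm_num, ?_⟩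
  intro n y τ hτpos hτle hlev h hh q hq1 hq2 S hShalf hSbd
  set N : ℝ := ∑ j, (y j) ^ 2 with hNdef
  set D : ℝ := ∑ i ∈ Sᶜ, (y i) ^ 2 with hDdef
  set B : ℝ := ∑ i ∈ S, (y i) ^ 2 with hBdef
  set A : ℝ := ∑ i ∈ Sᶜ, |y i| ^ q with hAdef
  have hD0 : 0 ≤ D := Finset.sum_nonneg fun i _ => sq_nonneg _
  have hB0 : 0 ≤ B := Finset.sum_nonneg fun i _ => sq_nonneg _
  have hNsplit : N = D + B := by
    rw [hNdef, hDdef, hBdef, add_comm, Finset.sum_add_sum_compl]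
  have hN0 : 0 ≤ N := by rw [hNsplit]; positivity
  have hh0 : (0 : ℝ) < h := lt_of_lt_of_le one_pos hh
  set sN : ℝ := Real.sqrt N with hsNdef
  have hsN0 : 0 ≤ sN := Real.sqrt_nonneg _
  -- D ≥ 1/4
  have hDq4 : (1 : ℝ) / 4 ≤ D := by
    have := mul_self_le_mul_self (by norm_num : (0:ℝ) ≤ 1/2) hShalf
    rw [Real.mul_self_sqrt hD0] at this
    linarith
  -- pointwise: |y i| ^ q as rpow of y i ^ 2
  have habsq : ∀ i, |y i| ^ q = ((y i) ^ 2) ^ (q / 2) := by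
    intro i
    rw [← sq_abs, ← Real.rpow_natCast |y i| 2, ← Real.rpow_mul (abs_nonneg _)]
    norm_num
    rw [show (2:ℝ) * (q / 2) = q by ring]
  -- D ^ (q/2) ≤ A
  have hq20 : (0 : ℝ) < q / 2 := by linarith
  have hq21 : q / 2 ≤ 1 := by linarith
  have hDqA : D ^ (q / 2) ≤ A := by
    calc D ^ (q / 2) ≤ ∑ i ∈ Sᶜ, ((y i) ^ 2) ^ (q / 2) :=
          aux_rpow_sum_le _ _ _ (fun i _ => sq_nonneg _) hq20 hq21
      _ = A := by rw [hAdef]; exact Finset.sum_congr rfl fun i _ => (habsq i).symm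
  -- A ≥ 1/4
  have hA4 : (1 : ℝ) / 4 ≤ A := by
    have h1 : ((1 : ℝ) / 4) ^ (q / 2) ≤ D ^ (q / 2) :=
      Real.rpow_le_rpow (by norm_num) hDq4 hq20.le
    have h2 : ((1 : ℝ) / 4) ^ (1 : ℝ) ≤ ((1 : ℝ) / 4) ^ (q / 2) :=
      Real.rpow_le_rpow_of_exponent_ge (by norm_num) (by norm_num) hq21
    rw [Real.rpow_one] at h2
    linarith
  have hA0 : 0 ≤ A := le_trans (by norm_num) hA4
  -- B ^ (q/2) ≤ 4A + B
  have hBq : B ^ (q / 2) ≤ 4 * A + B := by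
    rcases le_or_gt B 1 with hB1 | hB1
    · have : B ^ (q / 2) ≤ 1 :=
        Real.rpow_le_one hB0 hB1 hq20.le
      linarith
    · have : B ^ (q / 2) ≤ B ^ (1 : ℝ) :=
        Real.rpow_le_rpow_of_exponent_le hB1.le hq21
      rw [Real.rpow_one] at this
      linarith
  -- sN ^ q ≤ 5A + B
  have hsNq : sN ^ q ≤ 5 * A + B := by
    have e1 : sN ^ q = N ^ (q / 2) := by
      rw [hsNdef, Real.sqrt_eq_rpow, ← Real.rpow_mul hN0]
      ring_nf
    rw [e1, hNsplit]
    calc (D + B) ^ (q / 2) ≤ D ^ (q / 2) + B ^ (q / 2) :=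
          aux_rpow_add_le hD0 hB0 hq20.le hq21
      _ ≤ A + (4 * A + B) := add_le_add hDqA hBq
      _ = 5 * A + B := by ring
  -- sN ≤ 8A + B
  have hsNle : sN ≤ 8 * A + B := by
    have e1 : sN ≤ Real.sqrt D + Real.sqrt B := by
      rw [hsNdef, hNsplit, Real.sqrt_eq_rpow, Real.sqrt_eq_rpow, Real.sqrt_eq_rpow]
      exact aux_rpow_add_le hD0 hB0 (by norm_num) (by norm_num)
    have hsD : Real.sqrt D ≤ 4 * A := by
      rcases le_or_gt D 1 with hD1 | hD1
      · have : Real.sqrt D ≤ 1 := by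
          rw [show (1:ℝ) = Real.sqrt 1 by simp]
          exact Real.sqrt_le_sqrt hD1
        linarith
      · have h1 : Real.sqrt D ≤ D ^ (q / 2) := by
          rw [Real.sqrt_eq_rpow]
          exact Real.rpow_le_rpow_of_exponent_le hD1.le (by linarith)
        linarith
    have hsB : Real.sqrt B ≤ 4 * A + B := by
      rcases le_or_gt B 1 with hB1 | hB1
      · have : Real.sqrt B ≤ 1 := by
          rw [show (1:ℝ) = Real.sqrt 1 by simp]
          exact Real.sqrt_le_sqrt hB1
        linarith
      · have hsq : Real.sqrt B ≤ B := by
          calc Real.sqrt B ≤ Real.sqrt (B ^ 2) := Real.sqrt_le_sqrt (by nlinarith)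
            _ = B := Real.sqrt_sq hB0
        linarith
    linarith
  -- pointwise bound on Sᶜ
  have key1 : ∀ i ∈ Sᶜ, (1 / (h * Real.sqrt (τ i))) * |y i| ^ (2 * q)
      ≤ (1 / h) * (sN ^ q * |y i| ^ q) := by
    intro i _
    have hτi : 0 < Real.sqrt (τ i) := Real.sqrt_pos.mpr (hτpos i)
    have hyN : |y i| ≤ Real.sqrt (τ i) * sN := by
      have := hlev i
      calc |y i| = Real.sqrt ((y i) ^ 2) := (Real.sqrt_sq_eq_abs _).symm
        _ ≤ Real.sqrt (τ i * N) := Real.sqrt_le_sqrt (hlev i)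
        _ = Real.sqrt (τ i) * sN := Real.sqrt_mul (hτpos i).le N
    have hysN : |y i| ≤ sN := by
      calc |y i| ≤ Real.sqrt (τ i) * sN := hyN
        _ ≤ 1 * sN := by
            apply mul_le_mul_of_nonneg_right _ hsN0
            rw [show (1:ℝ) = Real.sqrt 1 by simp]
            exact Real.sqrt_le_sqrt (hτle i)
        _ = sN := one_mul _
    rcases eq_or_ne (y i) 0 with hy0 | hy0
    · rw [hy0]
      have h2q : (2 : ℝ) * q ≠ 0 := ne_of_gt (by linarith)
      rw [abs_zero, Real.zero_rpow h2q, mul_zero]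
      positivity
    · have hay : 0 < |y i| := abs_pos.mpr hy0
      have hsNpos : 0 < sN := lt_of_lt_of_le hay hysN
      have e1 : |y i| ^ (2 * q) = |y i| * (|y i| ^ (q - 1) * |y i| ^ q) := by
        rw [show (2:ℝ) * q = 1 + ((q - 1) + q) by ring, Real.rpow_add hay,
          Real.rpow_add hay, Real.rpow_one]
      have b1 : |y i| ^ (q - 1) ≤ sN ^ (q - 1) :=
        Real.rpow_le_rpow hay.le hysN (by linarith)
      have e2 : sN * sN ^ (q - 1) = sN ^ q := by
        have h1 := Real.rpow_add hsNpos 1 (q - 1)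
        rw [Real.rpow_one] at h1
        rw [← h1, show (1:ℝ) + (q - 1) = q by ring]
      have chain : |y i| ^ (2 * q) ≤ Real.sqrt (τ i) * (sN ^ q * |y i| ^ q) := by
        rw [e1]
        calc |y i| * (|y i| ^ (q - 1) * |y i| ^ q)
            ≤ (Real.sqrt (τ i) * sN) * (sN ^ (q - 1) * |y i| ^ q) := by
              apply mul_le_mul hyN _ (by positivity) (by positivity)
              exact mul_le_mul_of_nonneg_right b1 (by positivity)
          _ = Real.sqrt (τ i) * (sN ^ q * |y i| ^ q) := by
              rw [← e2]; ring
      rw [one_div_mul_eq_div, one_div_mul_eq_div, div_le_div_iff₀ (by positivity) hh0]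
      calc |y i| ^ (2 * q) * h ≤ (Real.sqrt (τ i) * (sN ^ q * |y i| ^ q)) * h :=
            mul_le_mul_of_nonneg_right chain hh0.le
        _ = sN ^ q * |y i| ^ q * (h * Real.sqrt (τ i)) := by ring
  -- pointwise bound on S
  have key2 : ∀ i ∈ S, (1 / (h * Real.sqrt (τ i))) * (y i) ^ 4
      ≤ (1 / h) * (sN * (y i) ^ 2) := by
    intro i hi
    have hτi : 0 < Real.sqrt (τ i) := Real.sqrt_pos.mpr (hτpos i)
    have hyN : |y i| ≤ Real.sqrt (τ i) * sN := by
      calc |y i| = Real.sqrt ((y i) ^ 2) := (Real.sqrt_sq_eq_abs _).symm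
        _ ≤ Real.sqrt (τ i * N) := Real.sqrt_le_sqrt (hlev i)
        _ = Real.sqrt (τ i) * sN := Real.sqrt_mul (hτpos i).le N
    have chain : (y i) ^ 4 ≤ Real.sqrt (τ i) * (sN * (y i) ^ 2) := by
      have e1 : (y i) ^ 4 = |y i| * (|y i| * (y i) ^ 2) := by
        rw [show |y i| * (|y i| * (y i) ^ 2) = |y i| * |y i| * (y i) ^ 2 by ring,
          abs_mul_abs_self]
        ring
      rw [e1]
      calc |y i| * (|y i| * (y i) ^ 2)
          ≤ (Real.sqrt (τ i) * sN) * (1 * (y i) ^ 2) := by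
            apply mul_le_mul hyN _ (by positivity) (by positivity)
            exact mul_le_mul_of_nonneg_right (hSbd i hi) (sq_nonneg _)
        _ = Real.sqrt (τ i) * (sN * (y i) ^ 2) := by ring
    rw [one_div_mul_eq_div, one_div_mul_eq_div, div_le_div_iff₀ (by positivity) hh0]
    calc (y i) ^ 4 * h ≤ (Real.sqrt (τ i) * (sN * (y i) ^ 2)) * h :=
          mul_le_mul_of_nonneg_right chain hh0.le
      _ = sN * (y i) ^ 2 * (h * Real.sqrt (τ i)) := by ring
  -- combine
  have sum1 : (∑ i ∈ Sᶜ, (1 / (h * Real.sqrt (τ i))) * |y i| ^ (2 * q))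
      ≤ (1 / h) * (sN ^ q * A) := by
    calc (∑ i ∈ Sᶜ, (1 / (h * Real.sqrt (τ i))) * |y i| ^ (2 * q))
        ≤ ∑ i ∈ Sᶜ, (1 / h) * (sN ^ q * |y i| ^ q) := Finset.sum_le_sum key1
      _ = (1 / h) * (sN ^ q * A) := by
          rw [hAdef, Finset.mul_sum, Finset.mul_sum]
  have sum2 : (∑ i ∈ S, (1 / (h * Real.sqrt (τ i))) * (y i) ^ 4)
      ≤ (1 / h) * (sN * B) := by
    calc (∑ i ∈ S, (1 / (h * Real.sqrt (τ i))) * (y i) ^ 4)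
        ≤ ∑ i ∈ S, (1 / h) * (sN * (y i) ^ 2) := Finset.sum_le_sum key2
      _ = (1 / h) * (sN * B) := by
          rw [hBdef, Finset.mul_sum, Finset.mul_sum]
  have hsNq0 : 0 ≤ sN ^ q := Real.rpow_nonneg hsN0 q
  have final : (1 / h) * (sN ^ q * A) + (1 / h) * (sN * B)
      ≤ (8 / h) * (A + B) ^ 2 := by
    have h1 : sN ^ q * A ≤ (5 * A + B) * A :=
      mul_le_mul_of_nonneg_right hsNq hA0
    have h2 : sN * B ≤ (8 * A + B) * B :=
      mul_le_mul_of_nonneg_right hsNle hB0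
    have h3 : (5 * A + B) * A + (8 * A + B) * B ≤ 8 * (A + B) ^ 2 := by nlinarith
    have hinv : 0 ≤ 1 / h := by positivity
    calc (1 / h) * (sN ^ q * A) + (1 / h) * (sN * B)
        = (1 / h) * (sN ^ q * A + sN * B) := by ring
      _ ≤ (1 / h) * (8 * (A + B) ^ 2) := by
          apply mul_le_mul_of_nonneg_left _ hinv
          linarith
      _ = (8 / h) * (A + B) ^ 2 := by ring
  calc (∑ i ∈ Sᶜ, (1 / (h * Real.sqrt (τ i))) * |y i| ^ (2 * q))
        + ∑ i ∈ S, (1 / (h * Real.sqrt (τ i))) * (y i) ^ 4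
      ≤ (1 / h) * (sN ^ q * A) + (1 / h) * (sN * B) := add_le_add sum1 sum2
    _ ≤ (8 / h) * (A + B) ^ 2 := final
end

section
/- Let t ∈ ℝⁿ_{≥0}, let A ∈ ℝ^{n×d} have full column rank, let x ∈ ℝ^d and y = Ax. Let j ∈ ℤ be such that 2^{j−1} ≤ t_i ≤ 2^j for all i ∈ [n]. Let h ≥ 1 and, for each i ∈ [n], set p_i = h·√τ_i where τ_i = a_iᵀ(AᵀA)⁻¹a_i is the leverage score of the i-th row of A. Then for 1 ≤ q ≤ 2 there is an absolute constant c such that Σ_{i∈[n]} (1/p_i)·(γ_q(t_i, y_i))² ≤ (c/h)·(Σ_{i∈[n]} γ_q(t_i, y_i))². -/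
open Matrix Finset

/-- The smoothed `q`-norm function `γ_q(t,x)`. -/
noncomputable def gammaFn (q t x : ℝ) : ℝ :=
  if |x| ≤ t then (q / 2) * t ^ (q - 2) * x ^ 2
  else |x| ^ q + (q / 2 - 1) * t ^ q

/-- The leverage score `τ_i(A) = a_iᵀ(AᵀA)⁻¹a_i` of the `i`-th row of `A`. -/
noncomputable def lev {n d : ℕ} (A : Matrix (Fin n) (Fin d) ℝ) (i : Fin n) : ℝ :=
  A i ⬝ᵥ ((Aᵀ * A)⁻¹.mulVec (A i))

-- two-term superadditivity for p ≥ 1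
lemma real_add_rpow {a b p : ℝ} (ha : 0 ≤ a) (hb : 0 ≤ b) (hp : 1 ≤ p) :
    a ^ p + b ^ p ≤ (a + b) ^ p := by
  have h := NNReal.add_rpow_le_rpow_add ⟨a, ha⟩ ⟨b, hb⟩ hp
  exact_mod_cast h

lemma real_rpow_add_le {a b p : ℝ} (ha : 0 ≤ a) (hb : 0 ≤ b) (hp0 : 0 ≤ p) (hp : p ≤ 1) :
    (a + b) ^ p ≤ a ^ p + b ^ p := by
  have h := NNReal.rpow_add_le_add_rpow ⟨a, ha⟩ ⟨b, hb⟩ hp0 hp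
  exact_mod_cast h

lemma sum_rpow_le_rpow_sum {ι : Type*} {s : Finset ι} {b : ι → ℝ}
    (hb : ∀ i ∈ s, 0 ≤ b i) {p : ℝ} (hp : 1 ≤ p) :
    ∑ i ∈ s, b i ^ p ≤ (∑ i ∈ s, b i) ^ p := by
  classical
  induction s using Finset.induction_on with
  | empty => simp [Real.zero_rpow (by linarith : p ≠ 0)]
  | @insert a s hx ih =>
    rw [Finset.sum_insert hx, Finset.sum_insert hx]
    have h1 : ∑ i ∈ s, b i ^ p ≤ (∑ i ∈ s, b i) ^ p :=
      ih fun i hi => hb i (Finset.mem_insert_of_mem hi)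
    calc b a ^ p + ∑ i ∈ s, b i ^ p ≤ b a ^ p + (∑ i ∈ s, b i) ^ p := by linarith
    _ ≤ (b a + ∑ i ∈ s, b i) ^ p :=
        real_add_rpow (hb a (Finset.mem_insert_self a s))
          (Finset.sum_nonneg fun i hi => hb i (Finset.mem_insert_of_mem hi)) hp

lemma sqrt_add_le {a b : ℝ} (ha : 0 ≤ a) (hb : 0 ≤ b) :
    Real.sqrt (a + b) ≤ Real.sqrt a + Real.sqrt b := by
  nlinarith [Real.sq_sqrt ha, Real.sq_sqrt hb, Real.sqrt_nonneg a, Real.sqrt_nonneg b,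
    Real.sq_sqrt (by linarith : (0:ℝ) ≤ a + b), Real.sqrt_nonneg (a + b),
    sq_nonneg (Real.sqrt a + Real.sqrt b - Real.sqrt (a+b))]

noncomputable def fFn (q T y : ℝ) : ℝ :=
  if |y| ≤ T then T ^ (q - 2) * y ^ 2 else |y| ^ q

lemma fFn_nonneg {q T y : ℝ} (hT : 0 ≤ T) : 0 ≤ fFn q T y := by
  unfold fFn
  split
  · positivity
  · positivity

lemma abs_rpow_q {q y : ℝ} (hy : 0 < |y|) : |y| ^ q = |y| ^ (q - 2) * y ^ 2 := by
  have h2 : |y| ^ ((2:ℕ):ℝ) = y ^ 2 := by rw [Real.rpow_natCast, sq_abs]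
  have := Real.rpow_add hy (q - 2) ((2:ℕ):ℝ)
  push_cast at this ⊢
  rw [show q - 2 + 2 = q by ring] at this
  rw [this]
  push_cast at h2
  rw [h2]

lemma gamma_le_two_fFn {q t T y : ℝ} (hq1 : 1 ≤ q) (hq2 : q ≤ 2) (hT : 0 < T)
    (ht1 : T / 2 ≤ t) (ht2 : t ≤ T) :
    gammaFn q t y ≤ 2 * fFn q T y := by
  have ht0 : 0 < t := lt_of_lt_of_le (by positivity) ht1
  have hhalf : (0:ℝ) < T / 2 := by positivity
  -- key: t ^ (q-2) ≤ 2 * T ^ (q-2)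
  have hkey : t ^ (q - 2) ≤ 2 * T ^ (q - 2) := by
    have h1 : t ^ (q - 2) ≤ (T / 2) ^ (q - 2) :=
      Real.rpow_le_rpow_of_nonpos hhalf ht1 (by linarith)
    have h2 : (T / 2) ^ (q - 2) = T ^ (q - 2) / 2 ^ (q - 2) :=
      Real.div_rpow hT.le (by norm_num : (0:ℝ) ≤ 2) (q - 2)
    have h3 : (1:ℝ) / 2 ^ (q - 2) = 2 ^ (2 - q) := by
      rw [show (2 - q) = -(q - 2) by ring, Real.rpow_neg (by norm_num : (0:ℝ) ≤ 2), one_div]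
    have h4 : (2:ℝ) ^ (2 - q) ≤ 2 ^ (1:ℝ) :=
      Real.rpow_le_rpow_of_exponent_le (by norm_num) (by linarith)
    have h5 : (2:ℝ) ^ (1:ℝ) = 2 := Real.rpow_one 2
    have hTq : 0 ≤ T ^ (q - 2) := Real.rpow_nonneg hT.le _
    calc t ^ (q - 2) ≤ T ^ (q - 2) / 2 ^ (q - 2) := by rw [← h2]; exact h1
      _ = T ^ (q - 2) * (1 / 2 ^ (q - 2)) := by ring
      _ = T ^ (q - 2) * 2 ^ (2 - q) := by rw [h3]
      _ ≤ T ^ (q - 2) * 2 := by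
          have := mul_le_mul_of_nonneg_left (h4.trans_eq h5) hTq
          linarith [this]
      _ = 2 * T ^ (q - 2) := by ring
  unfold gammaFn fFn
  by_cases h1 : |y| ≤ t
  · have h2 : |y| ≤ T := h1.trans ht2
    rw [if_pos h1, if_pos h2]
    have hy2 : (0:ℝ) ≤ y ^ 2 := sq_nonneg y
    have : (q / 2) * t ^ (q - 2) ≤ 2 * T ^ (q - 2) := by
      have hq2' : q / 2 ≤ 1 := by linarith
      have h0 : 0 ≤ t ^ (q - 2) := Real.rpow_nonneg ht0.le _
      nlinarith [hkey]
    nlinarith [this, hy2]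
  · push_neg at h1
    rw [if_neg (not_le.mpr h1)]
    have habs : 0 < |y| := lt_trans ht0 h1
    have hgle : |y| ^ q + (q / 2 - 1) * t ^ q ≤ |y| ^ q := by
      have : 0 ≤ t ^ q := Real.rpow_nonneg ht0.le _
      nlinarith
    by_cases h2 : |y| ≤ T
    · rw [if_pos h2]
      have h3 : |y| ^ (q - 2) ≤ t ^ (q - 2) :=
        Real.rpow_le_rpow_of_nonpos ht0 h1.le (by linarith)
      have h4 : |y| ^ q ≤ 2 * (T ^ (q - 2) * y ^ 2) := by
        rw [abs_rpow_q habs]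
        have hy2 : (0:ℝ) ≤ y ^ 2 := sq_nonneg y
        nlinarith [hkey, h3]
      linarith
    · rw [if_neg h2]
      have : 0 ≤ |y| ^ q := Real.rpow_nonneg (abs_nonneg y) _
      linarith
lemma fFn_le_two_gamma {q t T y : ℝ} (hq1 : 1 ≤ q) (hq2 : q ≤ 2) (hT : 0 < T)
    (ht1 : T / 2 ≤ t) (ht2 : t ≤ T) :
    fFn q T y ≤ 2 * gammaFn q t y := by
  have ht0 : 0 < t := lt_of_lt_of_le (by positivity) ht1
  unfold gammaFn fFn
  by_cases h1 : |y| ≤ t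
  · have h2 : |y| ≤ T := h1.trans ht2
    rw [if_pos h1, if_pos h2]
    have h3 : T ^ (q - 2) ≤ t ^ (q - 2) :=
      Real.rpow_le_rpow_of_nonpos ht0 ht2 (by linarith)
    have hy2 : (0:ℝ) ≤ y ^ 2 := sq_nonneg y
    nlinarith [mul_le_mul_of_nonneg_right h3 hy2,
      mul_nonneg (Real.rpow_nonneg ht0.le (q - 2)) hy2]
  · push_neg at h1
    rw [if_neg (not_le.mpr h1)]
    have habs : 0 < |y| := lt_trans ht0 h1
    -- gamma ≥ (q/2) |y|^q ≥ |y|^q / 2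
    have htq : t ^ q ≤ |y| ^ q := Real.rpow_le_rpow ht0.le h1.le (by linarith)
    have hglow : |y| ^ q / 2 ≤ |y| ^ q + (q / 2 - 1) * t ^ q := by
      have h0 : 0 ≤ |y| ^ q := Real.rpow_nonneg (abs_nonneg y) _
      nlinarith
    by_cases h2 : |y| ≤ T
    · rw [if_pos h2]
      have h3 : T ^ (q - 2) ≤ |y| ^ (q - 2) :=
        Real.rpow_le_rpow_of_nonpos habs h2 (by linarith)
      have h4 : T ^ (q - 2) * y ^ 2 ≤ |y| ^ q := by
        rw [abs_rpow_q habs]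
        have hy2 : (0:ℝ) ≤ y ^ 2 := sq_nonneg y
        nlinarith
      linarith
    · rw [if_neg h2]
      linarith

lemma gamma_nonneg {q t T y : ℝ} (hq1 : 1 ≤ q) (hq2 : q ≤ 2) (hT : 0 < T)
    (ht1 : T / 2 ≤ t) (ht2 : t ≤ T) : 0 ≤ gammaFn q t y := by
  have := fFn_le_two_gamma (y := y) hq1 hq2 hT ht1 ht2
  have h0 := fFn_nonneg (q := q) (y := y) hT.le
  linarith



lemma lev_eq_sum_sq {n d : ℕ} (A : Matrix (Fin n) (Fin d) ℝ) (hA : A.rank = d) (i : Fin n) :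
    ∃ z : Fin n → ℝ, lev A i = ∑ k, (z k) ^ 2 ∧ z i = lev A i ∧
      ∀ x : Fin d → ℝ, ∑ k, z k * A.mulVec x k = A.mulVec x i := by
  classical
  set M : Matrix (Fin d) (Fin d) ℝ := Aᵀ * A with hM
  have hrank : M.rank = d := by rw [hM, Matrix.rank_transpose_mul_self, hA]
  -- M is invertible
  have hker : LinearMap.ker M.mulVecLin = ⊥ := by
    have h1 := LinearMap.finrank_range_add_finrank_ker M.mulVecLin
    rw [show Module.finrank ℝ (Fin d → ℝ) = d by simp] at h1
    have h2 : Module.finrank ℝ (LinearMap.range M.mulVecLin) = d := hrank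
    have : Module.finrank ℝ (LinearMap.ker M.mulVecLin) = 0 := by omega
    exact Submodule.finrank_eq_zero.mp this
  have hinj : Function.Injective M.mulVec := by
    have := LinearMap.ker_eq_bot.mp hker
    simpa [Function.Injective] using this
  have hUnit : IsUnit M := Matrix.mulVec_injective_iff_isUnit.mp hinj
  have hdet : IsUnit M.det := (Matrix.isUnit_iff_isUnit_det M).mp hUnit
  set u : Fin d → ℝ := M⁻¹.mulVec (A i) with hu
  have hMu : M.mulVec u = A i := by
    rw [hu, Matrix.mulVec_mulVec, Matrix.mul_nonsing_inv _ hdet, Matrix.one_mulVec]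
  have key : ∀ x : Fin d → ℝ, (A.mulVec u) ⬝ᵥ (A.mulVec x) = A.mulVec x i := by
    intro x
    rw [Matrix.dotProduct_mulVec]
    have hv : A.vecMul (A.mulVec u) = A i := by
      rw [← Matrix.mulVec_transpose, Matrix.mulVec_mulVec, ← hM, hMu]
    rw [hv]
    rfl
  refine ⟨A.mulVec u, ?_, ?_, fun x => by simpa [dotProduct] using key x⟩
  · calc lev A i = (A.mulVec u) i := rfl
      _ = (A.mulVec u) ⬝ᵥ (A.mulVec u) := (key u).symm
      _ = ∑ k, (A.mulVec u k) ^ 2 := by simp [dotProduct, sq]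
  · rfl

set_option maxHeartbeats 1000000 in
lemma fFn_le_sqrt {ι : Type*} [Fintype ι] {q T τ : ℝ} (hq1 : 1 ≤ q) (hq2 : q ≤ 2)
    (hT : 0 < T) (w : ι → ℝ) (i : ι) (hτ0 : 0 ≤ τ) (hτ1 : τ ≤ 1)
    (hcs : (w i) ^ 2 ≤ τ * ∑ k, (w k) ^ 2) :
    fFn q T (w i) ≤ 2 * Real.sqrt τ * ∑ k, fFn q T (w k) := by
  classical
  have hq0 : 0 < q := by linarith
  set r := Real.sqrt τ with hr
  have hr0 : 0 ≤ r := Real.sqrt_nonneg τ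
  have hr1 : r ≤ 1 := by
    rw [hr, show (1:ℝ) = Real.sqrt 1 by simp]
    exact Real.sqrt_le_sqrt hτ1
  have hτr : τ ≤ r := by nlinarith [Real.sq_sqrt hτ0]
  set F := ∑ k, fFn q T (w k) with hF
  set S1 := ∑ k ∈ Finset.univ.filter (fun k => |w k| ≤ T), fFn q T (w k) with hS1
  set S2 := ∑ k ∈ Finset.univ.filter (fun k => ¬ |w k| ≤ T), fFn q T (w k) with hS2
  have hFeq : F = S1 + S2 := (Finset.sum_filter_add_sum_filter_not _ _ _).symm
  have hS1n : 0 ≤ S1 := Finset.sum_nonneg fun k _ => fFn_nonneg hT.le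
  have hS2n : 0 ≤ S2 := Finset.sum_nonneg fun k _ => fFn_nonneg hT.le
  have hFn : 0 ≤ F := by rw [hFeq]; linarith
  have hS1F : S1 ≤ F := by linarith
  have hS2F : S2 ≤ F := by linarith
  set W := ∑ k, (w k) ^ 2 with hW
  have hW0 : 0 ≤ W := Finset.sum_nonneg fun k _ => sq_nonneg _
  -- small coordinates
  have hsmall : ∑ k ∈ Finset.univ.filter (fun k => |w k| ≤ T), (w k) ^ 2
      = T ^ (2 - q) * S1 := by
    rw [hS1, Finset.mul_sum]
    apply Finset.sum_congr rfl
    intro k hk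
    have hk' : |w k| ≤ T := (Finset.mem_filter.mp hk).2
    rw [show fFn q T (w k) = T ^ (q - 2) * (w k) ^ 2 from if_pos hk']
    rw [← mul_assoc, ← Real.rpow_add hT]
    norm_num
  -- large coordinates
  have hlarge : ∑ k ∈ Finset.univ.filter (fun k => ¬ |w k| ≤ T), (w k) ^ 2
      ≤ S2 ^ (2 / q) := by
    have heach : ∀ k ∈ Finset.univ.filter (fun k => ¬ |w k| ≤ T),
        (w k) ^ 2 = (fFn q T (w k)) ^ (2 / q) := by
      intro k hk
      have hk' : ¬ |w k| ≤ T := (Finset.mem_filter.mp hk).2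
      rw [show fFn q T (w k) = |w k| ^ q from if_neg hk']
      rw [← Real.rpow_mul (abs_nonneg _), show q * (2 / q) = ((2:ℕ):ℝ) by push_cast; field_simp,
        Real.rpow_natCast, sq_abs]
    rw [Finset.sum_congr rfl heach]
    exact sum_rpow_le_rpow_sum (fun k _ => fFn_nonneg hT.le)
      (by rw [le_div_iff₀ hq0]; linarith : 1 ≤ 2 / q)
  have hWle : W ≤ T ^ (2 - q) * S1 + S2 ^ (2 / q) := by
    rw [hW, ← Finset.sum_filter_add_sum_filter_not Finset.univ (fun k => |w k| ≤ T), hsmall]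
    exact add_le_add_right hlarge _
  have habsle : |w i| ≤ r * Real.sqrt W := by
    have h1 : Real.sqrt ((w i) ^ 2) ≤ Real.sqrt (τ * W) := Real.sqrt_le_sqrt hcs
    rwa [Real.sqrt_sq_eq_abs, Real.sqrt_mul hτ0] at h1
  have hTq_pos : (0:ℝ) < T ^ q := Real.rpow_pos_of_pos hT q
  -- fact: if some coordinate is large, S2 ≥ T^q
  have hS2big : ∀ k : ι, ¬ |w k| ≤ T → T ^ q ≤ S2 := by
    intro k hk
    have hmem : k ∈ Finset.univ.filter (fun k => ¬ |w k| ≤ T) := by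
      simp only [Finset.mem_filter, Finset.mem_univ, true_and]; exact hk
    have h1 : T ^ q ≤ fFn q T (w k) := by
      rw [show fFn q T (w k) = |w k| ^ q from if_neg hk]
      exact Real.rpow_le_rpow hT.le (le_of_not_ge hk) hq0.le
    exact h1.trans (Finset.single_le_sum (fun k _ => fFn_nonneg hT.le) hmem)
  by_cases hcase : |w i| ≤ T
  · -- small case
    rw [show fFn q T (w i) = T ^ (q - 2) * (w i) ^ 2 from if_pos hcase]
    by_cases hbig : ∃ k, ¬ |w k| ≤ T
    · obtain ⟨k, hk⟩ := hbig
      have hS2T : T ^ q ≤ S2 := hS2big k hk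
      have hS2pos : 0 < S2 := hTq_pos.trans_le hS2T
      -- T^{q-2} |w i|^2 ≤ T^{q-1} * r * √W
      have hstep1 : T ^ (q - 2) * (w i) ^ 2 ≤ r * (T ^ (q - 1) * Real.sqrt W) := by
        have h1 : (w i) ^ 2 = |w i| * |w i| := by rw [← sq_abs]; ring
        have h2 : T ^ (q - 2) * (w i) ^ 2 ≤ T ^ (q - 2) * (T * (r * Real.sqrt W)) := by
          rw [h1]
          apply mul_le_mul_of_nonneg_left _ (Real.rpow_nonneg hT.le _)
          exact mul_le_mul hcase habsle (abs_nonneg _) hT.le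
        have h3 : T ^ (q - 2) * T = T ^ (q - 1) := by
          nth_rewrite 2 [show T = T ^ (1:ℝ) from (Real.rpow_one T).symm]
          rw [← Real.rpow_add hT, show q - 2 + 1 = q - 1 by ring]
        calc T ^ (q - 2) * (w i) ^ 2 ≤ T ^ (q - 2) * (T * (r * Real.sqrt W)) := h2
          _ = (T ^ (q - 2) * T) * (r * Real.sqrt W) := by ring
          _ = r * (T ^ (q - 1) * Real.sqrt W) := by rw [h3]; ring
      -- √W ≤ √(T^{2-q} S1) + S2^{1/q}
      have hsplit : Real.sqrt W ≤ Real.sqrt (T ^ (2 - q) * S1) + S2 ^ (1 / q) := by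
        have h1 : Real.sqrt W ≤ Real.sqrt (T ^ (2 - q) * S1 + S2 ^ (2 / q)) :=
          Real.sqrt_le_sqrt hWle
        have h2 : Real.sqrt (T ^ (2 - q) * S1 + S2 ^ (2 / q))
            ≤ Real.sqrt (T ^ (2 - q) * S1) + Real.sqrt (S2 ^ (2 / q)) :=
          sqrt_add_le (mul_nonneg (Real.rpow_nonneg hT.le _) hS1n) (Real.rpow_nonneg hS2n _)
        have h3 : Real.sqrt (S2 ^ (2 / q)) = S2 ^ (1 / q) := by
          rw [Real.sqrt_eq_rpow, ← Real.rpow_mul hS2n]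
          congr 1
          field_simp
        linarith
      -- T^{q-1} * √(T^{2-q} S1) ≤ √S2 √S1 ≤ F
      have hterm1 : T ^ (q - 1) * Real.sqrt (T ^ (2 - q) * S1) ≤ F := by
        have h1 : Real.sqrt (T ^ (2 - q) * S1) = T ^ ((2 - q) / 2) * Real.sqrt S1 := by
          rw [Real.sqrt_mul (Real.rpow_nonneg hT.le _), Real.sqrt_eq_rpow,
            ← Real.rpow_mul hT.le]
          ring_nf
        have h2 : T ^ (q - 1) * T ^ ((2 - q) / 2) = T ^ (q / 2) := by
          rw [← Real.rpow_add hT]; ring_nf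
        have h3 : T ^ (q / 2) ≤ Real.sqrt S2 := by
          rw [Real.sqrt_eq_rpow, show q / 2 = q * (1/2) by ring, Real.rpow_mul hT.le]
          exact Real.rpow_le_rpow (Real.rpow_nonneg hT.le _) hS2T (by norm_num)
        have h4 : Real.sqrt S2 * Real.sqrt S1 ≤ F := by
          nlinarith [sq_nonneg (Real.sqrt S1 - Real.sqrt S2), Real.sq_sqrt hS1n,
            Real.sq_sqrt hS2n, Real.sqrt_nonneg S1, Real.sqrt_nonneg S2]
        calc T ^ (q - 1) * Real.sqrt (T ^ (2 - q) * S1)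
            = (T ^ (q - 1) * T ^ ((2 - q) / 2)) * Real.sqrt S1 := by rw [h1]; ring
          _ = T ^ (q / 2) * Real.sqrt S1 := by rw [h2]
          _ ≤ Real.sqrt S2 * Real.sqrt S1 :=
              mul_le_mul_of_nonneg_right h3 (Real.sqrt_nonneg _)
          _ ≤ F := h4
      -- T^{q-1} * S2^{1/q} ≤ S2
      have hterm2 : T ^ (q - 1) * S2 ^ (1 / q) ≤ S2 := by
        have hTle : T ≤ S2 ^ (1 / q) := by
          have := Real.rpow_le_rpow (Real.rpow_nonneg hT.le q) hS2T
            (one_div_nonneg.mpr hq0.le)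
          rwa [← Real.rpow_mul hT.le, mul_one_div, div_self hq0.ne', Real.rpow_one] at this
        have h1 : T ^ (q - 1) ≤ (S2 ^ (1 / q)) ^ (q - 1) :=
          Real.rpow_le_rpow hT.le hTle (by linarith)
        have h2 : (S2 ^ (1 / q)) ^ (q - 1) * S2 ^ (1 / q) = S2 := by
          rw [← Real.rpow_mul hS2n, ← Real.rpow_add hS2pos,
            show 1 / q * (q - 1) + 1 / q = 1 by field_simp; ring, Real.rpow_one]
        calc T ^ (q - 1) * S2 ^ (1 / q) ≤ (S2 ^ (1 / q)) ^ (q - 1) * S2 ^ (1 / q) :=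
              mul_le_mul_of_nonneg_right h1 (Real.rpow_nonneg hS2n _)
          _ = S2 := h2
      calc T ^ (q - 2) * (w i) ^ 2 ≤ r * (T ^ (q - 1) * Real.sqrt W) := hstep1
        _ ≤ r * (T ^ (q - 1) * (Real.sqrt (T ^ (2 - q) * S1) + S2 ^ (1 / q))) := by
            apply mul_le_mul_of_nonneg_left _ hr0
            exact mul_le_mul_of_nonneg_left hsplit (Real.rpow_nonneg hT.le _)
        _ = r * (T ^ (q - 1) * Real.sqrt (T ^ (2 - q) * S1) + T ^ (q - 1) * S2 ^ (1 / q)) := by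
            ring
        _ ≤ r * (F + S2) := by
            apply mul_le_mul_of_nonneg_left _ hr0
            linarith
        _ ≤ 2 * r * F := by nlinarith
    · -- all coordinates small
      push_neg at hbig
      have hS2z : S2 = 0 := by
        rw [hS2]
        apply Finset.sum_eq_zero
        intro k hk
        exact absurd (Finset.mem_filter.mp hk).2 (by simpa using hbig k)
      have hz : S2 ^ (2 / q) = 0 := by
        rw [hS2z]; exact Real.zero_rpow (div_pos two_pos hq0).ne'
      have hWle' : W ≤ T ^ (2 - q) * S1 := by
        rw [hz] at hWle; linarith
      have h1 : T ^ (q - 2) * (w i) ^ 2 ≤ T ^ (q - 2) * (τ * W) :=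
        mul_le_mul_of_nonneg_left hcs (Real.rpow_nonneg hT.le _)
      have h2 : T ^ (q - 2) * (τ * W) ≤ T ^ (q - 2) * (τ * (T ^ (2 - q) * S1)) := by
        apply mul_le_mul_of_nonneg_left _ (Real.rpow_nonneg hT.le _)
        exact mul_le_mul_of_nonneg_left hWle' hτ0
      have h3 : T ^ (q - 2) * (τ * (T ^ (2 - q) * S1)) = τ * S1 := by
        rw [show T ^ (q - 2) * (τ * (T ^ (2 - q) * S1))
          = (T ^ (q - 2) * T ^ (2 - q)) * (τ * S1) by ring, ← Real.rpow_add hT]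
        norm_num
      have h4 : τ * S1 ≤ r * S1 := mul_le_mul_of_nonneg_right hτr hS1n
      have h5 : r * S1 ≤ 2 * r * F := by nlinarith
      linarith
  · -- large case
    rw [show fFn q T (w i) = |w i| ^ q from if_neg hcase]
    push_neg at hcase
    have hS2T : T ^ q ≤ S2 := hS2big i (not_le.mpr hcase)
    have hS2pos : 0 < S2 := hTq_pos.trans_le hS2T
    have hFpos : 0 < F := by linarith
    have hwpos : 0 < |w i| := hT.trans hcase
    have hrpos : 0 < r := by
      rcases hr0.lt_or_eq with h | h
      · exact h
      · exfalso
        have : |w i| ≤ 0 := by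
          rw [← h] at habsle
          simpa using habsle
        linarith
    have h1 : |w i| ^ q ≤ (r * Real.sqrt W) ^ q :=
      Real.rpow_le_rpow (abs_nonneg _) habsle hq0.le
    have h2 : (r * Real.sqrt W) ^ q = r ^ q * (Real.sqrt W) ^ q :=
      Real.mul_rpow hr0 (Real.sqrt_nonneg _)
    have h3 : r ^ q ≤ r := by
      have := Real.rpow_le_rpow_of_exponent_ge hrpos hr1 hq1
      rwa [Real.rpow_one] at this
    have h4 : (Real.sqrt W) ^ q = W ^ (q / 2) := by
      rw [Real.sqrt_eq_rpow, ← Real.rpow_mul hW0]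
      ring_nf
    have h5 : W ^ (q / 2) ≤ (T ^ (2 - q) * S1 + S2 ^ (2 / q)) ^ (q / 2) :=
      Real.rpow_le_rpow hW0 hWle (div_nonneg hq0.le two_pos.le)
    have h6 : (T ^ (2 - q) * S1 + S2 ^ (2 / q)) ^ (q / 2)
        ≤ (T ^ (2 - q) * S1) ^ (q / 2) + (S2 ^ (2 / q)) ^ (q / 2) :=
      real_rpow_add_le (mul_nonneg (Real.rpow_nonneg hT.le _) hS1n)
        (Real.rpow_nonneg hS2n _) (div_nonneg hq0.le two_pos.le) (by linarith)
    have h7 : (S2 ^ (2 / q)) ^ (q / 2) = S2 := by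
      rw [← Real.rpow_mul hS2n, show 2 / q * (q / 2) = 1 by field_simp, Real.rpow_one]
    have h8 : (T ^ (2 - q) * S1) ^ (q / 2) ≤ F := by
      have e1 : (T ^ (2 - q) * S1) ^ (q / 2)
          = (T ^ q) ^ ((2 - q) / 2) * S1 ^ (q / 2) := by
        rw [Real.mul_rpow (Real.rpow_nonneg hT.le _) hS1n,
          ← Real.rpow_mul hT.le, ← Real.rpow_mul hT.le]
        ring_nf
      have e2 : (T ^ q) ^ ((2 - q) / 2) ≤ S2 ^ ((2 - q) / 2) :=
        Real.rpow_le_rpow (Real.rpow_nonneg hT.le _) hS2T (by linarith)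
      have e3 : S2 ^ ((2 - q) / 2) ≤ F ^ ((2 - q) / 2) :=
        Real.rpow_le_rpow hS2n hS2F (by linarith)
      have e4 : S1 ^ (q / 2) ≤ F ^ (q / 2) :=
        Real.rpow_le_rpow hS1n hS1F (div_nonneg hq0.le two_pos.le)
      have e5 : F ^ ((2 - q) / 2) * F ^ (q / 2) = F := by
        rw [← Real.rpow_add hFpos, show (2 - q) / 2 + q / 2 = 1 by ring, Real.rpow_one]
      calc (T ^ (2 - q) * S1) ^ (q / 2)
          = (T ^ q) ^ ((2 - q) / 2) * S1 ^ (q / 2) := e1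
        _ ≤ S2 ^ ((2 - q) / 2) * S1 ^ (q / 2) :=
            mul_le_mul_of_nonneg_right e2 (Real.rpow_nonneg hS1n _)
        _ ≤ F ^ ((2 - q) / 2) * F ^ (q / 2) :=
            mul_le_mul e3 e4 (Real.rpow_nonneg hS1n _) (Real.rpow_nonneg hFn _)
        _ = F := e5
    calc |w i| ^ q ≤ r ^ q * (Real.sqrt W) ^ q := by rw [← h2]; exact h1
      _ ≤ r * W ^ (q / 2) := by
          rw [h4]
          exact mul_le_mul_of_nonneg_right h3 (Real.rpow_nonneg hW0 _)
      _ ≤ r * ((T ^ (2 - q) * S1) ^ (q / 2) + (S2 ^ (2 / q)) ^ (q / 2)) := by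
          apply mul_le_mul_of_nonneg_left _ hr0
          linarith
      _ ≤ r * (F + S2) := by
          apply mul_le_mul_of_nonneg_left _ hr0
          rw [h7]
          linarith
      _ ≤ 2 * r * F := by nlinarith

/-- variance bound: there is an absolute constant `c` such that for
`t ≥ 0` with `2^{j-1} ≤ t_i ≤ 2^j`, full column rank `A`, `y = Ax`, `h ≥ 1`,
`p_i = h√τ_i`, and `1 ≤ q ≤ 2`:
`Σ_i (1/p_i)(γ_q(t_i,y_i))² ≤ (c/h)(Σ_i γ_q(t_i,y_i))²`. -/
theorem stmt2 :
    ∃ c : ℝ, 0 < c ∧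
      ∀ (n d : ℕ) (t : Fin n → ℝ) (A : Matrix (Fin n) (Fin d) ℝ),
        (∀ i, 0 ≤ t i) →
        A.rank = d →
        ∀ (x : Fin d → ℝ) (j : ℤ),
        (∀ i, (2 : ℝ) ^ (j - 1) ≤ t i) → (∀ i, t i ≤ (2 : ℝ) ^ j) →
        ∀ h : ℝ, 1 ≤ h →
        ∀ q : ℝ, 1 ≤ q → q ≤ 2 →
        ∑ i, (1 / (h * Real.sqrt (lev A i))) * (gammaFn q (t i) ((A.mulVec x) i)) ^ 2
          ≤ (c / h) * (∑ i, gammaFn q (t i) ((A.mulVec x) i)) ^ 2 := by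
  refine ⟨8, by norm_num, ?_⟩
  intro n d t A ht0 hrank x j hj1 hj2 h hh q hq1 hq2
  have hh0 : 0 < h := lt_of_lt_of_le one_pos hh
  set T : ℝ := (2 : ℝ) ^ j with hTdef
  have hT : 0 < T := zpow_pos (by norm_num) j
  have ht1 : ∀ i, T / 2 ≤ t i := by
    intro i
    have := hj1 i
    rwa [zpow_sub_one₀ (by norm_num : (2:ℝ) ≠ 0), ← hTdef,
      show T * (2:ℝ)⁻¹ = T / 2 by ring] at this
  have ht2 : ∀ i, t i ≤ T := hj2
  set y : Fin n → ℝ := A.mulVec x with hy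
  set g : Fin n → ℝ := fun i => gammaFn q (t i) (y i) with hg
  set S : ℝ := ∑ i, g i with hS
  have hgnn : ∀ i, 0 ≤ g i := fun i => gamma_nonneg hq1 hq2 hT (ht1 i) (ht2 i)
  have hSnn : 0 ≤ S := Finset.sum_nonneg fun i _ => hgnn i
  -- leverage score facts
  have hlev : ∀ i : Fin n, 0 ≤ lev A i ∧ lev A i ≤ 1 ∧
      (y i) ^ 2 ≤ lev A i * ∑ k, (y k) ^ 2 := by
    intro i
    obtain ⟨z, hz1, hz2, hz3⟩ := lev_eq_sum_sq A hrank i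
    have hτ0 : 0 ≤ lev A i := by
      rw [hz1]; exact Finset.sum_nonneg fun k _ => sq_nonneg _
    have hτsq : (lev A i) ^ 2 ≤ lev A i := by
      calc (lev A i) ^ 2 = (z i) ^ 2 := by rw [hz2]
        _ ≤ ∑ k, (z k) ^ 2 :=
            Finset.single_le_sum (fun k _ => sq_nonneg (z k)) (Finset.mem_univ i)
        _ = lev A i := hz1.symm
    have hτ1 : lev A i ≤ 1 := by nlinarith
    refine ⟨hτ0, hτ1, ?_⟩
    have hcs := Finset.sum_mul_sq_le_sq_mul_sq Finset.univ z y
    rw [hz3 x] at hcs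
    rw [← hz1] at hcs
    exact hcs
  -- pointwise bound : g i ≤ 8 √τ_i S
  have hkey : ∀ i, g i ≤ 8 * Real.sqrt (lev A i) * S := by
    intro i
    obtain ⟨hτ0, hτ1, hcs⟩ := hlev i
    have h1 : g i ≤ 2 * fFn q T (y i) :=
      gamma_le_two_fFn hq1 hq2 hT (ht1 i) (ht2 i)
    have h2 : fFn q T (y i) ≤ 2 * Real.sqrt (lev A i) * ∑ k, fFn q T (y k) :=
      fFn_le_sqrt hq1 hq2 hT y i hτ0 hτ1 hcs
    have h3 : ∑ k, fFn q T (y k) ≤ 2 * S := by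
      rw [hS, Finset.mul_sum]
      exact Finset.sum_le_sum fun k _ =>
        (fFn_le_two_gamma hq1 hq2 hT (ht1 k) (ht2 k)).trans_eq (by ring)
    have hr0 : 0 ≤ Real.sqrt (lev A i) := Real.sqrt_nonneg _
    nlinarith
  have hmain : ∀ i, (1 / (h * Real.sqrt (lev A i))) * (g i) ^ 2 ≤ (8 * S / h) * g i := by
    intro i
    set r := Real.sqrt (lev A i) with hrdef
    have hr0 : 0 ≤ r := Real.sqrt_nonneg _
    rcases hr0.lt_or_eq with hr | hr
    · have hgsq : (g i) ^ 2 ≤ 8 * r * S * g i := by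
        nlinarith [hkey i, hgnn i]
      have hpos : 0 < h * r := by positivity
      calc (1 / (h * r)) * (g i) ^ 2 ≤ (1 / (h * r)) * (8 * r * S * g i) := by
            apply mul_le_mul_of_nonneg_left hgsq
            positivity
        _ = (8 * S / h) * g i := by field_simp
    · have h1 := hkey i
      rw [← hrdef, ← hr] at h1
      have hg0 : g i = 0 := le_antisymm (by linarith) (hgnn i)
      rw [hg0]
      simp
  calc ∑ i, (1 / (h * Real.sqrt (lev A i))) * (g i) ^ 2
      ≤ ∑ i, (8 * S / h) * g i := Finset.sum_le_sum fun i _ => hmain i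
    _ = (8 / h) * S ^ 2 := by rw [← Finset.mul_sum, ← hS]; ring
end

section
/- Let y, ỹ, t ∈ ℝⁿ_{≥0} with ‖y − ỹ‖₁ ≤ α, ‖y‖₁ ≤ θ, and t_i ≥ 1 for all i. Let 1 ≤ q ≤ 2. Then |Σ_{i∈[n]} γ_q(t_i, ỹ_i) − Σ_{i∈[n]} γ_q(t_i, y_i)| ≤ Σ_{i∈[n]} |γ_q(t_i, ỹ_i) − γ_q(t_i, y_i)| ≤ 4·n·α·(α + θ). -/
open Finset

private lemma quad_diff (q s a b M : ℝ) (hq1 : 1 ≤ q) (hq2 : q ≤ 2)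
    (hs0 : 0 ≤ s) (hs1 : s ≤ 1) (ha : 0 ≤ a) (hab : a ≤ b) (hbM : b ≤ M) :
    q / 2 * s * b ^ 2 - q / 2 * s * a ^ 2 ≤ 2 * M * (b - a) ∧
      q / 2 * s * a ^ 2 ≤ q / 2 * s * b ^ 2 := by
  have hqs0 : 0 ≤ q / 2 * s := mul_nonneg (by linarith) hs0
  have hqs1 : q / 2 * s ≤ 1 := by nlinarith
  have hsq : a ^ 2 ≤ b ^ 2 := by nlinarith
  constructor
  · have h1 : q / 2 * s * b ^ 2 - q / 2 * s * a ^ 2 = q / 2 * s * (b ^ 2 - a ^ 2) := by ring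
    have h2 : q / 2 * s * (b ^ 2 - a ^ 2) ≤ 1 * (b ^ 2 - a ^ 2) :=
      mul_le_mul_of_nonneg_right hqs1 (by linarith)
    have h3 : b ^ 2 - a ^ 2 ≤ 2 * M * (b - a) := by
      nlinarith [mul_nonneg (sub_nonneg.2 hab) (show (0:ℝ) ≤ 2 * M - b - a by linarith)]
    linarith
  · exact mul_le_mul_of_nonneg_left hsq hqs0

private lemma pow_diff_le (q a b M : ℝ) (hq1 : 1 ≤ q) (hq2 : q ≤ 2)
    (ha : 1 ≤ a) (hab : a ≤ b) (hbM : b ≤ M) :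
    b ^ q - a ^ q ≤ 2 * M * (b - a) ∧ a ^ q ≤ b ^ q := by
  have ha0 : (0:ℝ) < a := by linarith
  have hb0 : (0:ℝ) < b := by linarith
  have hbq : b ^ q = b ^ (q - 2) * b ^ (2:ℕ) := by
    rw [← Real.rpow_natCast b 2, ← Real.rpow_add hb0]; norm_num
  have haq : a ^ q = a ^ (q - 2) * a ^ (2:ℕ) := by
    rw [← Real.rpow_natCast a 2, ← Real.rpow_add ha0]; norm_num
  have h1 : b ^ (q - 2) ≤ a ^ (q - 2) :=
    Real.rpow_le_rpow_of_nonpos ha0 hab (by linarith)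
  have h2 : a ^ (q - 2) ≤ 1 := Real.rpow_le_one_of_one_le_of_nonpos ha (by linarith)
  have h3 : (0:ℝ) ≤ b ^ (q - 2) := Real.rpow_nonneg hb0.le _
  constructor
  · have e1 : b ^ (q - 2) * b ^ (2:ℕ) ≤ a ^ (q - 2) * b ^ (2:ℕ) :=
      mul_le_mul_of_nonneg_right h1 (sq_nonneg b)
    have e3 : (0:ℝ) ≤ b ^ (2:ℕ) - a ^ (2:ℕ) := by nlinarith
    have e4 : a ^ (q - 2) * (b ^ (2:ℕ) - a ^ (2:ℕ)) ≤ 1 * (b ^ (2:ℕ) - a ^ (2:ℕ)) :=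
      mul_le_mul_of_nonneg_right h2 e3
    have e5 : b ^ (2:ℕ) - a ^ (2:ℕ) ≤ 2 * M * (b - a) := by
      nlinarith [mul_nonneg (sub_nonneg.2 hab) (show (0:ℝ) ≤ 2 * M - b - a by linarith)]
    have e6 : a ^ (q - 2) * b ^ (2:ℕ) - a ^ (q - 2) * a ^ (2:ℕ)
        = a ^ (q - 2) * (b ^ (2:ℕ) - a ^ (2:ℕ)) := by ring
    rw [hbq, haq]
    linarith
  · exact Real.rpow_le_rpow ha0.le hab (by linarith)

private lemma gamma_mono_le (q tt a b M : ℝ) (hq1 : 1 ≤ q) (hq2 : q ≤ 2) (ht : 1 ≤ tt)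
    (ha : 0 ≤ a) (hab : a ≤ b) (hbM : b ≤ M) :
    gammaFn q tt b - gammaFn q tt a ≤ 2 * M * (b - a) ∧
      gammaFn q tt a ≤ gammaFn q tt b := by
  have hb : (0:ℝ) ≤ b := le_trans ha hab
  have ht0 : (0:ℝ) < tt := by linarith
  have habs_a : |a| = a := abs_of_nonneg ha
  have habs_b : |b| = b := abs_of_nonneg hb
  have hs1 : tt ^ (q - 2) ≤ 1 := Real.rpow_le_one_of_one_le_of_nonpos ht (by linarith)
  have hs0 : (0:ℝ) ≤ tt ^ (q - 2) := Real.rpow_nonneg ht0.le _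
  have htq : (q / 2 - 1) * tt ^ q = q / 2 * tt ^ (q - 2) * tt ^ (2:ℕ) - tt ^ q := by
    have : tt ^ q = tt ^ (q - 2) * tt ^ (2:ℕ) := by
      rw [← Real.rpow_natCast tt 2, ← Real.rpow_add ht0]; norm_num
    rw [this]; ring
  simp only [gammaFn, habs_a, habs_b]
  by_cases hbt : b ≤ tt
  · have hat : a ≤ tt := le_trans hab hbt
    rw [if_pos hat, if_pos hbt]
    exact quad_diff q (tt ^ (q - 2)) a b M hq1 hq2 hs0 hs1 ha hab hbM
  · rw [if_neg hbt]
    have htb : tt ≤ b := (not_le.1 hbt).le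
    have htM : tt ≤ M := le_trans htb hbM
    obtain ⟨hp1, hp2⟩ := pow_diff_le q tt b M hq1 hq2 ht htb hbM
    by_cases hat : a ≤ tt
    · rw [if_pos hat]
      obtain ⟨hq1', hq2'⟩ := quad_diff q (tt ^ (q - 2)) a tt M hq1 hq2 hs0 hs1 ha hat htM
      constructor
      · linarith
      · linarith
    · rw [if_neg hat]
      have hta : tt ≤ a := (not_le.1 hat).le
      obtain ⟨hp1', hp2'⟩ := pow_diff_le q a b M hq1 hq2 (le_trans ht hta) hab hbM
      exact ⟨by linarith, by linarith⟩

private lemma gamma_abs_le (q tt a b M : ℝ) (hq1 : 1 ≤ q) (hq2 : q ≤ 2) (ht : 1 ≤ tt)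
    (ha : 0 ≤ a) (hb : 0 ≤ b) (haM : a ≤ M) (hbM : b ≤ M) :
    |gammaFn q tt b - gammaFn q tt a| ≤ 2 * M * |b - a| := by
  rcases le_total a b with hab | hab
  · obtain ⟨h1, h2⟩ := gamma_mono_le q tt a b M hq1 hq2 ht ha hab hbM
    rw [abs_of_nonneg (by linarith), abs_of_nonneg (by linarith)]
    exact h1
  · obtain ⟨h1, h2⟩ := gamma_mono_le q tt b a M hq1 hq2 ht hb hab haM
    rw [abs_of_nonpos (by linarith), abs_of_nonpos (by linarith)]
    linarith

/-- if `y, ỹ, t ≥ 0`, `‖y − ỹ‖₁ ≤ α`, `‖y‖₁ ≤ θ`, `t_i ≥ 1`, and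
`1 ≤ q ≤ 2`, then
`|Σ_i γ_q(t_i, ỹ_i) − Σ_i γ_q(t_i, y_i)| ≤ Σ_i |γ_q(t_i, ỹ_i) − γ_q(t_i, y_i)|
   ≤ 4nα(α + θ)`. -/
theorem stmt5 (n : ℕ) (y yt t : Fin n → ℝ) (α θ : ℝ)
    (hy0 : ∀ i, 0 ≤ y i) (hyt0 : ∀ i, 0 ≤ yt i) (ht0 : ∀ i, 0 ≤ t i)
    (ht1 : ∀ i, 1 ≤ t i)
    (hα : ∑ i, |y i - yt i| ≤ α) (hθ : ∑ i, |y i| ≤ θ)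
    (q : ℝ) (hq1 : 1 ≤ q) (hq2 : q ≤ 2) :
    |∑ i, gammaFn q (t i) (yt i) - ∑ i, gammaFn q (t i) (y i)|
        ≤ ∑ i, |gammaFn q (t i) (yt i) - gammaFn q (t i) (y i)| ∧
      ∑ i, |gammaFn q (t i) (yt i) - gammaFn q (t i) (y i)|
        ≤ 4 * n * α * (α + θ) := by
  constructor
  · rw [← Finset.sum_sub_distrib]
    exact Finset.abs_sum_le_sum_abs _ _
  · rcases Nat.eq_zero_or_pos n with rfl | hn
    · simp
    have hn1 : (1:ℝ) ≤ (n:ℝ) := by exact_mod_cast hn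
    have hterm : ∀ i : Fin n, |y i - yt i| ≤ α := fun i =>
      le_trans (Finset.single_le_sum (f := fun j => |y j - yt j|)
        (fun j _ => abs_nonneg _) (Finset.mem_univ i)) hα
    have hterm' : ∀ i : Fin n, |y i| ≤ θ := fun i =>
      le_trans (Finset.single_le_sum (f := fun j => |y j|)
        (fun j _ => abs_nonneg _) (Finset.mem_univ i)) hθ
    obtain ⟨i0⟩ : Nonempty (Fin n) := ⟨⟨0, hn⟩⟩
    have hα0 : 0 ≤ α := le_trans (abs_nonneg _) (hterm i0)
    have hθ0 : 0 ≤ θ := le_trans (abs_nonneg _) (hterm' i0)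
    set M := α + θ with hM
    have hM0 : 0 ≤ M := by rw [hM]; linarith
    have hyM : ∀ i, y i ≤ M := fun i => by
      have := hterm' i; rw [abs_of_nonneg (hy0 i)] at this; rw [hM]; linarith
    have hytM : ∀ i, yt i ≤ M := fun i => by
      have h1 := hterm i; have h2 := hterm' i
      rw [abs_of_nonneg (hy0 i)] at h2
      have h3 := abs_le.1 h1
      rw [hM]; linarith [h3.1, h3.2]
    have key : ∀ i : Fin n, |gammaFn q (t i) (yt i) - gammaFn q (t i) (y i)|
        ≤ 2 * M * |y i - yt i| := fun i => by
      have := gamma_abs_le q (t i) (y i) (yt i) M hq1 hq2 (ht1 i)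
        (hy0 i) (hyt0 i) (hyM i) (hytM i)
      rwa [abs_sub_comm (yt i) (y i)] at this
    calc ∑ i, |gammaFn q (t i) (yt i) - gammaFn q (t i) (y i)|
        ≤ ∑ i, 2 * M * |y i - yt i| := Finset.sum_le_sum fun i _ => key i
      _ = 2 * M * ∑ i, |y i - yt i| := by rw [Finset.mul_sum]
      _ ≤ 2 * M * α := mul_le_mul_of_nonneg_left hα (by linarith)
      _ ≤ 4 * n * α * (α + θ) := by
          rw [← hM]
          have h1 : (0:ℝ) ≤ ((n:ℝ) - 1) * α * M :=
            mul_nonneg (mul_nonneg (by linarith) hα0) hM0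
          have h2 : (0:ℝ) ≤ α * M := mul_nonneg hα0 hM0
          nlinarith
end

section
/- Let y, t ∈ ℝⁿ_{≥0} with 1 ≤ t_i ≤ β for all i, and let 1 ≤ q ≤ 2. Then Σ_{i∈[n]} γ_q(t_i, y_i) ≥ min{ ‖y‖₂²/(8β), ‖y‖_q^q/(8n) }. -/
open Finset

lemma gamma_case2_lb (q t x : ℝ) (ht : 1 ≤ t) (hq1 : 1 ≤ q) (hq2 : q ≤ 2) (hx : t < x) :
    x ^ q / 2 ≤ gammaFn q t x := by
  have hx0 : (0:ℝ) < x := lt_of_le_of_lt (by linarith) hx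
  have habs : |x| = x := abs_of_nonneg hx0.le
  unfold gammaFn
  rw [if_neg (by rw [habs]; linarith), habs]
  have htq : t ^ q ≤ x ^ q := Real.rpow_le_rpow (by linarith) hx.le (by linarith)
  have htq0 : (0:ℝ) ≤ t ^ q := Real.rpow_nonneg (by linarith) _
  nlinarith [htq, htq0]

lemma gamma_nonneg_s6 (q t x : ℝ) (ht : 1 ≤ t) (hq1 : 1 ≤ q) (hq2 : q ≤ 2) :
    0 ≤ gammaFn q t x := by
  by_cases h : |x| ≤ t
  · unfold gammaFn
    rw [if_pos h]
    have : (0:ℝ) ≤ t ^ (q - 2) := Real.rpow_nonneg (by linarith) _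
    positivity
  · push_neg at h
    have h1 : gammaFn q t x = gammaFn q t |x| := by
      unfold gammaFn; rw [abs_abs, sq_abs]
    have h2 := gamma_case2_lb q t |x| ht hq1 hq2 h
    have h3 : (0:ℝ) ≤ |x| ^ q := Real.rpow_nonneg (abs_nonneg _) _
    rw [h1]; linarith

lemma gamma_sq_lb (q t x β : ℝ) (ht1 : 1 ≤ t) (ht2 : t ≤ β) (hq1 : 1 ≤ q) (hq2 : q ≤ 2)
    (hx0 : 0 ≤ x) (hxβ : x ≤ β) : x ^ 2 / (2 * β) ≤ gammaFn q t x := by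
  have hβ : (1:ℝ) ≤ β := le_trans ht1 ht2
  have hβ0 : (0:ℝ) < β := by linarith
  by_cases h : x ≤ t
  · unfold gammaFn
    rw [if_pos (by rw [abs_of_nonneg hx0]; exact h)]
    have ht0 : (0:ℝ) < t := by linarith
    have h1 : t ^ (-1:ℝ) ≤ t ^ (q - 2) :=
      Real.rpow_le_rpow_of_exponent_le ht1 (by linarith)
    have h2 : t ^ (-1:ℝ) = 1 / t := by rw [Real.rpow_neg_one]; exact inv_eq_one_div t
    have h3 : 1 / β ≤ 1 / t := by
      apply one_div_le_one_div_of_le ht0 ht2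
    have h4 : 1 / β ≤ t ^ (q - 2) := by rw [h2] at h1; linarith
    rw [div_le_iff₀ (by positivity)]
    have h5 : (1 / β) * x ^ 2 * (2 * β) = 2 * x ^ 2 := by field_simp
    nlinarith [mul_nonneg (sub_nonneg.2 h4) (sq_nonneg x),
      mul_nonneg (mul_nonneg (sub_nonneg.2 hq1) (Real.rpow_nonneg ht0.le (q-2))) (sq_nonneg x),
      Real.rpow_nonneg ht0.le (q-2), sq_nonneg x]
  · push_neg at h
    have hx1 : (1:ℝ) ≤ x := le_trans ht1 h.le
    have hx0' : (0:ℝ) < x := by linarith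
    have key := gamma_case2_lb q t x ht1 hq1 hq2 h
    have h1 : x ^ (-1:ℝ) ≤ x ^ (q - 2) :=
      Real.rpow_le_rpow_of_exponent_le hx1 (by linarith)
    have h2 : x ^ (-1:ℝ) = 1 / x := by rw [Real.rpow_neg_one]; exact inv_eq_one_div x
    have h3 : 1 / β ≤ 1 / x := one_div_le_one_div_of_le hx0' hxβ
    have h4 : 1 / β ≤ x ^ (q - 2) := by rw [h2] at h1; linarith
    have h5 : x ^ q = x ^ 2 * x ^ (q - 2) := by
      rw [← Real.rpow_natCast x 2, ← Real.rpow_add hx0']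
      norm_num
    have h6 : x ^ 2 / β ≤ x ^ q := by
      rw [h5]
      have := mul_le_mul_of_nonneg_left h4 (sq_nonneg x)
      calc x ^ 2 / β = x ^ 2 * (1 / β) := by ring
        _ ≤ x ^ 2 * x ^ (q - 2) := this
    calc x ^ 2 / (2 * β) = (x ^ 2 / β) / 2 := by ring
      _ ≤ x ^ q / 2 := by linarith
      _ ≤ gammaFn q t x := key

/-- if `y, t ≥ 0`, `1 ≤ t_i ≤ β`, and `1 ≤ q ≤ 2`, then
`Σ_i γ_q(t_i, y_i) ≥ min{‖y‖₂²/(8β), ‖y‖_q^q/(8n)}`. -/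
theorem stmt6 (n : ℕ) (y t : Fin n → ℝ) (β : ℝ) (q : ℝ)
    (hy : ∀ i, 0 ≤ y i) (ht1 : ∀ i, 1 ≤ t i) (ht2 : ∀ i, t i ≤ β)
    (hq1 : 1 ≤ q) (hq2 : q ≤ 2) :
    min ((∑ i, (y i) ^ 2) / (8 * β)) ((∑ i, |y i| ^ q) / (8 * n))
      ≤ ∑ i, gammaFn q (t i) (y i) := by
  rcases Nat.eq_zero_or_pos n with hn | hn
  · subst hn
    simp
  have hβ : (1:ℝ) ≤ β := le_trans (ht1 ⟨0, hn⟩) (ht2 ⟨0, hn⟩)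
  have hβ0 : (0:ℝ) < β := by linarith
  by_cases hT : ∀ i, y i ≤ β
  · calc min ((∑ i, (y i) ^ 2) / (8 * β)) ((∑ i, |y i| ^ q) / (8 * n))
        ≤ (∑ i, (y i) ^ 2) / (8 * β) := min_le_left _ _
      _ ≤ (∑ i, (y i) ^ 2) / (2 * β) := by
          apply div_le_div_of_nonneg_left _ (by linarith) (by linarith)
          · positivity
      _ = ∑ i, (y i) ^ 2 / (2 * β) := by rw [Finset.sum_div]
      _ ≤ ∑ i, gammaFn q (t i) (y i) := by
          apply Finset.sum_le_sum
          intro i _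
          exact gamma_sq_lb q (t i) (y i) β (ht1 i) (ht2 i) hq1 hq2 (hy i) (hT i)
  · push_neg at hT
    obtain ⟨j0, hj0⟩ := hT
    obtain ⟨j, -, hj⟩ := Finset.exists_max_image Finset.univ y ⟨j0, mem_univ _⟩
    have hjβ : β < y j := lt_of_lt_of_le hj0 (hj j0 (mem_univ _))
    have hn' : (0:ℝ) < (n:ℝ) := by exact_mod_cast hn
    have h1 : ∑ i, |y i| ^ q ≤ (n:ℝ) * (y j ^ q) := by
      calc ∑ i, |y i| ^ q ≤ ∑ _i : Fin n, y j ^ q := by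
            apply Finset.sum_le_sum
            intro i _
            rw [abs_of_nonneg (hy i)]
            exact Real.rpow_le_rpow (hy i) (hj i (mem_univ _)) (by linarith)
        _ = (n:ℝ) * y j ^ q := by
            rw [Finset.sum_const, Finset.card_univ, Fintype.card_fin, nsmul_eq_mul]
    have h2 : y j ^ q / 2 ≤ ∑ i, gammaFn q (t i) (y i) := by
      calc y j ^ q / 2 ≤ gammaFn q (t j) (y j) :=
            gamma_case2_lb q (t j) (y j) (ht1 j) hq1 hq2 (lt_of_le_of_lt (ht2 j) hjβ)
        _ ≤ ∑ i, gammaFn q (t i) (y i) := by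
            apply Finset.single_le_sum (fun i _ => gamma_nonneg_s6 q (t i) (y i) (ht1 i) hq1 hq2)
              (mem_univ j)
    have hyjq : (0:ℝ) ≤ y j ^ q := Real.rpow_nonneg (hy j) _
    calc min ((∑ i, (y i) ^ 2) / (8 * β)) ((∑ i, |y i| ^ q) / (8 * n))
        ≤ (∑ i, |y i| ^ q) / (8 * n) := min_le_right _ _
      _ ≤ ((n:ℝ) * y j ^ q) / (8 * n) := by
          apply div_le_div_of_nonneg_right h1 (by positivity)
      _ = y j ^ q / 8 := by field_simp
      _ ≤ y j ^ q / 2 := by linarith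
      _ ≤ ∑ i, gammaFn q (t i) (y i) := h2
end

section
/- Let Z, Z̃ ∈ ℝ^{d×d} and C ∈ ℝ^{r×r} be symmetric positive definite matrices, let U ∈ ℝ^{r×d}, and let 0 < ε < 1. Suppose (1/(1+ε))·Z⁻¹ ⪯ Z̃⁻¹ ⪯ (1/(1−ε))·Z⁻¹ in the Loewner order. Then (1/(1+ε))·(Z + UᵀCU)⁻¹ ⪯ Z̃⁻¹ − Z̃⁻¹Uᵀ(C⁻¹ + U Z̃⁻¹ Uᵀ)⁻¹ U Z̃⁻¹ ⪯ (1/(1−ε))·(Z + UᵀCU)⁻¹. -/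
open Matrix


private lemma psd_smul' {n : ℕ} {c : ℝ} (hc : 0 ≤ c) {M : Matrix (Fin n) (Fin n) ℝ}
    (hM : M.PosSemidef) : (c • M).PosSemidef := by
  refine ⟨?_, fun x => ?_⟩
  · rw [Matrix.IsHermitian, conjTranspose_smul, star_trivial, hM.1]
  · exact (hM.smul hc).2 x

private lemma pd_smul' {n : ℕ} {c : ℝ} (hc : 0 < c) {M : Matrix (Fin n) (Fin n) ℝ}
    (hM : M.PosDef) : (c • M).PosDef := by
  refine ⟨?_, fun x hx => ?_⟩
  · rw [Matrix.IsHermitian, conjTranspose_smul, star_trivial, hM.1]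
  · exact (hM.smul hc).2 hx

private lemma mySmulInv13 {n : ℕ} {c : ℝ} (hc : c ≠ 0) {M : Matrix (Fin n) (Fin n) ℝ}
    (hM : IsUnit M.det) : (c • M)⁻¹ = c⁻¹ • M⁻¹ := by
  haveI := invertibleOfNonzero hc
  have h2 := Matrix.inv_smul (A := M) c hM
  rwa [invOf_eq_inv] at h2

/-- inverse is antitone on positive definite matrices -/
private lemma psd_inv_sub_inv {n : ℕ} {A B : Matrix (Fin n) (Fin n) ℝ}
    (hA : A.PosDef) (hB : B.PosDef) (h : (B - A).PosSemidef) :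
    (A⁻¹ - B⁻¹).PosSemidef := by
  have hAd : IsUnit A.det := hA.det_pos.ne'.isUnit
  have hBd : IsUnit B.det := hB.det_pos.ne'.isUnit
  have key : A⁻¹ - B⁻¹ =
      B⁻¹ * (B - A) * B⁻¹ + (B⁻¹ * (B - A)) * A⁻¹ * ((B - A) * B⁻¹) := by
    simp only [Matrix.mul_sub, Matrix.sub_mul, Matrix.mul_assoc,
      Matrix.nonsing_inv_mul_cancel_left _ _ hBd, Matrix.nonsing_inv_mul_cancel_left _ _ hAd,
      Matrix.mul_nonsing_inv_cancel_left _ _ hAd, Matrix.mul_nonsing_inv_cancel_left _ _ hBd,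
      Matrix.nonsing_inv_mul _ hBd, Matrix.mul_nonsing_inv _ hBd,
      Matrix.nonsing_inv_mul _ hAd, Matrix.mul_nonsing_inv _ hAd,
      Matrix.mul_one, Matrix.one_mul]
    abel
  rw [key]
  have hBinvH : (B⁻¹)ᴴ = B⁻¹ := hB.posSemidef.inv.isHermitian
  have h1 : (B⁻¹ * (B - A) * (B⁻¹)ᴴ).PosSemidef := h.mul_mul_conjTranspose_same B⁻¹
  rw [hBinvH] at h1
  have hE : ((B - A) * B⁻¹)ᴴ = B⁻¹ * (B - A) := by
    rw [conjTranspose_mul, hBinvH, h.isHermitian]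
  have h2 : (((B - A) * B⁻¹)ᴴ * A⁻¹ * ((B - A) * B⁻¹)).PosSemidef :=
    hA.posSemidef.inv.conjTranspose_mul_mul_same ((B - A) * B⁻¹)
  rw [hE] at h2
  exact h1.add h2

/-- numerical stability of Sherman–Morrison–Woodbury inverse maintenance.
If `Z, Z̃, C` are symmetric positive definite, `0 < ε < 1`, and
`(1/(1+ε))Z⁻¹ ⪯ Z̃⁻¹ ⪯ (1/(1−ε))Z⁻¹` in the Loewner order, then
`(1/(1+ε))(Z + UᵀCU)⁻¹ ⪯ Z̃⁻¹ − Z̃⁻¹Uᵀ(C⁻¹ + UZ̃⁻¹Uᵀ)⁻¹UZ̃⁻¹ ⪯ (1/(1−ε))(Z + UᵀCU)⁻¹`. -/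
theorem stmt13 (d r : ℕ)
    (Z Zt : Matrix (Fin d) (Fin d) ℝ) (C : Matrix (Fin r) (Fin r) ℝ)
    (U : Matrix (Fin r) (Fin d) ℝ)
    (hZ : Z.PosDef) (hZt : Zt.PosDef) (hC : C.PosDef)
    (ε : ℝ) (hε0 : 0 < ε) (hε1 : ε < 1)
    (hlow : (Zt⁻¹ - (1 / (1 + ε)) • Z⁻¹).PosSemidef)
    (hhigh : ((1 / (1 - ε)) • Z⁻¹ - Zt⁻¹).PosSemidef) :
    ((Zt⁻¹ - Zt⁻¹ * Uᵀ * (C⁻¹ + U * Zt⁻¹ * Uᵀ)⁻¹ * U * Zt⁻¹)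
        - (1 / (1 + ε)) • (Z + Uᵀ * C * U)⁻¹).PosSemidef ∧
      ((1 / (1 - ε)) • (Z + Uᵀ * C * U)⁻¹
        - (Zt⁻¹ - Zt⁻¹ * Uᵀ * (C⁻¹ + U * Zt⁻¹ * Uᵀ)⁻¹ * U * Zt⁻¹)).PosSemidef := by
  have h1p : (0:ℝ) < 1 + ε := by linarith
  have h1m : (0:ℝ) < 1 - ε := by linarith
  set R : Matrix (Fin d) (Fin d) ℝ := Uᵀ * C * U with hR
  have hRpsd : R.PosSemidef := by
    have h := hC.posSemidef.conjTranspose_mul_mul_same (B := U)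
    simpa [conjTranspose_eq_transpose_of_trivial] using h
  have hUZU : (U * Zt⁻¹ * Uᵀ).PosSemidef := by
    have h := hZt.inv.posSemidef.mul_mul_conjTranspose_same (B := U)
    simpa [conjTranspose_eq_transpose_of_trivial] using h
  have hS : (C⁻¹ + U * Zt⁻¹ * Uᵀ).PosDef := hC.inv.add_posSemidef hUZU
  have hW : (Zt + Uᵀ * C * U)⁻¹ =
      Zt⁻¹ - Zt⁻¹ * Uᵀ * (C⁻¹ + U * Zt⁻¹ * Uᵀ)⁻¹ * U * Zt⁻¹ :=
    Matrix.add_mul_mul_inv_eq_sub _ _ _ _ hZt.isUnit hC.isUnit hS.isUnit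
  have hZR : (Z + R).PosDef := hZ.add_posSemidef hRpsd
  have hZtR : (Zt + R).PosDef := hZt.add_posSemidef hRpsd
  constructor
  · -- lower bound
    have e1 : ((1+ε) • Z)⁻¹ = (1/(1+ε)) • Z⁻¹ := by
      rw [mySmulInv13 h1p.ne' hZ.det_pos.ne'.isUnit, one_div]
    have step1' := psd_inv_sub_inv (pd_smul' h1p hZ).inv hZt.inv (by rw [e1]; exact hlow)
    rw [Matrix.nonsing_inv_nonsing_inv _ (pd_smul' h1p hZ).det_pos.ne'.isUnit,
      Matrix.nonsing_inv_nonsing_inv _ hZt.det_pos.ne'.isUnit] at step1'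
    have step2 : ((1+ε) • (Z + R) - (Zt + R)).PosSemidef := by
      have he : (1+ε) • (Z + R) - (Zt + R) = ((1+ε) • Z - Zt) + ε • R := by module
      rw [he]
      exact step1'.add (psd_smul' hε0.le hRpsd)
    have step3 := psd_inv_sub_inv hZtR (pd_smul' h1p hZR) step2
    rw [mySmulInv13 h1p.ne' hZR.det_pos.ne'.isUnit, hW, ← one_div (1+ε)] at step3
    exact step3
  · -- upper bound
    have e1 : ((1-ε) • Z)⁻¹ = (1/(1-ε)) • Z⁻¹ := by
      rw [mySmulInv13 h1m.ne' hZ.det_pos.ne'.isUnit, one_div]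
    have step1' := psd_inv_sub_inv hZt.inv (pd_smul' h1m hZ).inv (by rw [e1]; exact hhigh)
    rw [Matrix.nonsing_inv_nonsing_inv _ (pd_smul' h1m hZ).det_pos.ne'.isUnit,
      Matrix.nonsing_inv_nonsing_inv _ hZt.det_pos.ne'.isUnit] at step1'
    have step2 : ((Zt + R) - (1-ε) • (Z + R)).PosSemidef := by
      have he : (Zt + R) - (1-ε) • (Z + R) = (Zt - (1-ε) • Z) + ε • R := by module
      rw [he]
      exact step1'.add (psd_smul' hε0.le hRpsd)
    have step3 := psd_inv_sub_inv (pd_smul' h1m hZR) hZtR step2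
    rw [mySmulInv13 h1m.ne' hZR.det_pos.ne'.isUnit, hW, ← one_div (1-ε)] at step3
    exact step3
end

section
/- Let A ∈ ℝ^{n×d} have full column rank, b ∈ ℝⁿ, λ ≥ 1, and let M ∈ ℝ^{d×d} be a symmetric positive definite matrix with AᵀA ⪯ M ⪯ λ·AᵀA in the Loewner order. Let x* = argmin_x ‖Ax − b‖₂² and define the iteration x⁽ᵏ⁺¹⁾ = x⁽ᵏ⁾ − M⁻¹(AᵀA·x⁽ᵏ⁾ − Aᵀb). Then for every k ≥ 0, ‖x⁽ᵏ⁾ − x*‖_M ≤ (1 − 1/λ)^k · ‖x⁽⁰⁾ − x*‖_M. -/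
open Matrix Finset

/-- dot-product symmetry for symmetric matrices -/
lemma stmt14_symm_dot {d : ℕ} {P : Matrix (Fin d) (Fin d) ℝ} (hP : Pᵀ = P)
    (x y : Fin d → ℝ) : x ⬝ᵥ P *ᵥ y = y ⬝ᵥ P *ᵥ x := by
  rw [dotProduct_mulVec, ← mulVec_transpose, hP, dotProduct_comm]

/-- Cauchy–Schwarz for a positive semidefinite quadratic form -/
lemma stmt14_cs {d : ℕ} {P : Matrix (Fin d) (Fin d) ℝ} (hP : Pᵀ = P)
    (hP2 : ∀ v, 0 ≤ v ⬝ᵥ P *ᵥ v) (x y : Fin d → ℝ) :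
    (x ⬝ᵥ P *ᵥ y) ^ 2 ≤ (x ⬝ᵥ P *ᵥ x) * (y ⬝ᵥ P *ᵥ y) := by
  have h := discrim_le_zero (a := y ⬝ᵥ P *ᵥ y) (b := 2 * (x ⬝ᵥ P *ᵥ y))
      (c := x ⬝ᵥ P *ᵥ x) ?_
  · rw [discrim] at h; nlinarith [h]
  · intro s
    have h2 := hP2 (x + s • y)
    have expand : (x + s • y) ⬝ᵥ P *ᵥ (x + s • y)
        = (y ⬝ᵥ P *ᵥ y) * (s * s) + (2 * (x ⬝ᵥ P *ᵥ y)) * s + x ⬝ᵥ P *ᵥ x := by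
      rw [mulVec_add, mulVec_smul]
      simp only [dotProduct_add, add_dotProduct, dotProduct_smul, smul_dotProduct,
        smul_eq_mul, stmt14_symm_dot hP y x]
      ring
    linarith [expand ▸ h2]


/-- one-step contraction of preconditioned Richardson, at quadratic-form level -/
lemma stmt14_step {d : ℕ} (M G : Matrix (Fin d) (Fin d) ℝ) (c : ℝ)
    (hc0 : 0 < c) (hc1 : c ≤ 1)
    (hMs : Mᵀ = M) (hGs : Gᵀ = G)
    (hMMinv : M * M⁻¹ = 1) (hMinvM : M⁻¹ * M = 1) (hMinvs : M⁻¹ᵀ = M⁻¹)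
    (hMinvPSD : ∀ v : Fin d → ℝ, 0 ≤ v ⬝ᵥ M⁻¹ *ᵥ v)
    (hlow' : ∀ v : Fin d → ℝ, v ⬝ᵥ G *ᵥ v ≤ v ⬝ᵥ M *ᵥ v)
    (hGc : ∀ v : Fin d → ℝ, c * (v ⬝ᵥ M *ᵥ v) ≤ v ⬝ᵥ G *ᵥ v)
    (e : Fin d → ℝ) :
    (e - M⁻¹ *ᵥ (G *ᵥ e)) ⬝ᵥ M *ᵥ (e - M⁻¹ *ᵥ (G *ᵥ e))
      ≤ (1 - c) ^ 2 * (e ⬝ᵥ M *ᵥ e) := by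
  set g := G *ᵥ e with hg
  set m := M⁻¹ *ᵥ g with hm
  have hMm : M *ᵥ m = g := by
    rw [hm, mulVec_mulVec, hMMinv, one_mulVec]
  have h1 : (e - m) ⬝ᵥ M *ᵥ (e - m)
      = e ⬝ᵥ M *ᵥ e - 2 * (e ⬝ᵥ g) + g ⬝ᵥ (M⁻¹ *ᵥ g) := by
    have hmMe : m ⬝ᵥ M *ᵥ e = e ⬝ᵥ g := by
      rw [stmt14_symm_dot hMs m e, hMm]
    have hmMm : m ⬝ᵥ M *ᵥ m = g ⬝ᵥ (M⁻¹ *ᵥ g) := by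
      rw [hMm, hm, dotProduct_comm]
    have heMm : e ⬝ᵥ M *ᵥ m = e ⬝ᵥ g := by rw [hMm]
    rw [mulVec_sub, dotProduct_sub, sub_dotProduct, sub_dotProduct,
      hmMe, hmMm, heMm]
    ring
  set P : Matrix (Fin d) (Fin d) ℝ := G - c • M with hP
  have hPs : Pᵀ = P := by
    rw [hP, transpose_sub, transpose_smul, hGs, hMs]
  have hPq : ∀ v : Fin d → ℝ, v ⬝ᵥ P *ᵥ v = v ⬝ᵥ G *ᵥ v - c * (v ⬝ᵥ M *ᵥ v) := by
    intro v
    rw [hP, sub_mulVec, dotProduct_sub, smul_mulVec, dotProduct_smul, smul_eq_mul]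
  have hPpsd : ∀ v : Fin d → ℝ, 0 ≤ v ⬝ᵥ P *ᵥ v := by
    intro v
    rw [hPq v]
    linarith [hGc v]
  set p := P *ᵥ e with hp
  set y := M⁻¹ *ᵥ p with hy
  set t := p ⬝ᵥ y with ht
  have hMy : M *ᵥ y = p := by rw [hy, mulVec_mulVec, hMMinv, one_mulVec]
  have ht0 : 0 ≤ t := by rw [ht, hy]; exact hMinvPSD p
  have htPy : e ⬝ᵥ P *ᵥ y = t := by
    rw [stmt14_symm_dot hPs e y, ← hp, dotProduct_comm, ht]
  have hyMy : y ⬝ᵥ M *ᵥ y = t := by rw [hMy, dotProduct_comm, ht]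
  have hyPy : y ⬝ᵥ P *ᵥ y ≤ (1 - c) * t := by
    have h2 := hlow' y
    rw [hyMy] at h2
    rw [hPq y, hyMy]
    linarith
  have hcs := stmt14_cs hPs hPpsd e y
  rw [htPy] at hcs
  have hePe : 0 ≤ e ⬝ᵥ P *ᵥ e := hPpsd e
  have hkey : t ≤ (1 - c) * (e ⬝ᵥ P *ᵥ e) := by
    rcases eq_or_lt_of_le ht0 with h0 | hpos
    · rw [← h0]; exact mul_nonneg (by linarith) hePe
    · have h3 : t ^ 2 ≤ (e ⬝ᵥ P *ᵥ e) * ((1 - c) * t) :=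
        le_trans hcs (mul_le_mul_of_nonneg_left hyPy hePe)
      nlinarith [h3, hpos]
  have hMinvMe : M⁻¹ *ᵥ (M *ᵥ e) = e := by
    rw [mulVec_mulVec, hMinvM, one_mulVec]
  have hpval : p = g - c • (M *ᵥ e) := by
    rw [hp, hP, sub_mulVec, smul_mulVec, hg]
  have hyval : y = M⁻¹ *ᵥ g - c • e := by
    rw [hy, hpval, mulVec_sub, mulVec_smul, hMinvMe]
  have hMeMinvg : (M *ᵥ e) ⬝ᵥ (M⁻¹ *ᵥ g) = e ⬝ᵥ g := by
    rw [stmt14_symm_dot hMinvs (M *ᵥ e) g, hMinvMe]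
    exact dotProduct_comm g e
  have hMee : (M *ᵥ e) ⬝ᵥ e = e ⬝ᵥ M *ᵥ e := dotProduct_comm _ _
  have hge : g ⬝ᵥ e = e ⬝ᵥ g := dotProduct_comm _ _
  have htval : t = g ⬝ᵥ (M⁻¹ *ᵥ g) - 2 * c * (e ⬝ᵥ g) + c ^ 2 * (e ⬝ᵥ M *ᵥ e) := by
    rw [ht, hpval, hyval]
    simp only [sub_dotProduct, dotProduct_sub, smul_dotProduct, dotProduct_smul,
      smul_eq_mul]
    rw [hMeMinvg, hMee, hge]
    ring
  have hPe_val : e ⬝ᵥ P *ᵥ e = e ⬝ᵥ g - c * (e ⬝ᵥ M *ᵥ e) := hPq e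
  rw [hPe_val] at hkey hePe
  rw [h1]
  set qM : ℝ := e ⬝ᵥ M *ᵥ e with hqM
  set qg : ℝ := e ⬝ᵥ g with hqg
  set qi : ℝ := g ⬝ᵥ (M⁻¹ *ᵥ g) with hqi
  clear_value t qM qg qi
  clear hcs ht0 htPy hyMy hyPy h1 hPq hPpsd hPe_val hMy hMm hpval hyval
    hMeMinvg hMee hge hMinvMe hg hm hp hy ht hqM hqg hqi
  have h4 : t ≤ (2 - 2 * c) * (qg - c * qM) := by
    nlinarith [hkey, hePe, hc1, mul_nonneg (by linarith : (0:ℝ) ≤ 1 - c) hePe]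
  nlinarith [htval, h4]

/-- preconditioned Richardson iteration.  If `A` has full column rank,
`λ ≥ 1`, `M` is symmetric positive definite with `AᵀA ⪯ M ⪯ λAᵀA`,
`x* = argmin ‖Ax−b‖₂²`, and `x⁽ᵏ⁺¹⁾ = x⁽ᵏ⁾ − M⁻¹(AᵀAx⁽ᵏ⁾ − Aᵀb)`, then
`‖x⁽ᵏ⁾ − x*‖_M ≤ (1 − 1/λ)^k ‖x⁽⁰⁾ − x*‖_M`, where `‖v‖_M = √(vᵀMv)`. -/
theorem stmt14 (n d : ℕ) (A : Matrix (Fin n) (Fin d) ℝ) (hA : A.rank = d)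
    (b : Fin n → ℝ) (lam : ℝ) (hlam : 1 ≤ lam)
    (M : Matrix (Fin d) (Fin d) ℝ) (hM : M.PosDef)
    (hlow : (M - Aᵀ * A).PosSemidef)
    (hhigh : (lam • (Aᵀ * A) - M).PosSemidef)
    (xstar : Fin d → ℝ)
    (hxstar : ∀ z, ∑ i, ((A.mulVec xstar - b) i) ^ 2 ≤ ∑ i, ((A.mulVec z - b) i) ^ 2)
    (x : ℕ → Fin d → ℝ)
    (hiter : ∀ k, x (k + 1)
      = x k - M⁻¹.mulVec ((Aᵀ * A).mulVec (x k) - Aᵀ.mulVec b)) :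
    ∀ k : ℕ,
      Real.sqrt ((x k - xstar) ⬝ᵥ M.mulVec (x k - xstar))
        ≤ (1 - 1 / lam) ^ k * Real.sqrt ((x 0 - xstar) ⬝ᵥ M.mulVec (x 0 - xstar)) := by
  have hlam0 : (0 : ℝ) < lam := lt_of_lt_of_le one_pos hlam
  set G := Aᵀ * A with hG
  set c : ℝ := 1 / lam with hc
  have hc0 : 0 < c := by positivity
  have hc1 : c ≤ 1 := by rw [hc, div_le_one hlam0]; linarith
  have hclam : c * lam = 1 := by rw [hc]; field_simp
  have hMs : Mᵀ = M := hM.1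
  have hGs : Gᵀ = G := by rw [hG, transpose_mul, transpose_transpose]
  have hMdet : IsUnit M.det := hM.det_pos.ne'.isUnit
  have hMMinv : M * M⁻¹ = 1 := mul_nonsing_inv M hMdet
  have hMinvM : M⁻¹ * M = 1 := nonsing_inv_mul M hMdet
  have hMinvs : M⁻¹ᵀ = M⁻¹ := by rw [transpose_nonsing_inv, hMs]
  have hMinvPSD : ∀ v : Fin d → ℝ, 0 ≤ v ⬝ᵥ M⁻¹ *ᵥ v := by
    intro v; have := (hM.inv).posSemidef.dotProduct_mulVec_nonneg v; simpa using this
  -- quadratic-form consequences of the Loewner bounds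
  have hlow' : ∀ v : Fin d → ℝ, v ⬝ᵥ G *ᵥ v ≤ v ⬝ᵥ M *ᵥ v := by
    intro v
    have h0 := hlow.dotProduct_mulVec_nonneg v
    simp only [star_trivial, sub_mulVec, dotProduct_sub] at h0
    linarith
  have hhigh' : ∀ v : Fin d → ℝ, v ⬝ᵥ M *ᵥ v ≤ lam * (v ⬝ᵥ G *ᵥ v) := by
    intro v
    have h0 := hhigh.dotProduct_mulVec_nonneg v
    simp only [star_trivial, sub_mulVec, dotProduct_sub, smul_mulVec,
      dotProduct_smul, smul_eq_mul] at h0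
    linarith
  -- normal equations
  have hnorm : G *ᵥ xstar = Aᵀ *ᵥ b := by
    set r := A *ᵥ xstar - b with hr
    set s := Aᵀ *ᵥ r with hs
    have hss : s ⬝ᵥ s = 0 := by
      have key : ∀ t : ℝ, 0 ≤ ((A *ᵥ s) ⬝ᵥ (A *ᵥ s)) * (t * t) + (-(2 * (s ⬝ᵥ s))) * t + 0 := by
        intro t
        have h1 := hxstar (xstar - t • s)
        have e1 : A *ᵥ (xstar - t • s) - b = r - t • (A *ᵥ s) := by
          rw [mulVec_sub, mulVec_smul, hr]; abel
        have sum_eq : ∀ v : Fin n → ℝ, ∑ i, (v i) ^ 2 = v ⬝ᵥ v := by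
          intro v; simp [dotProduct, pow_two]
        rw [sum_eq, sum_eq, e1] at h1
        have e2 : (r - t • (A *ᵥ s)) ⬝ᵥ (r - t • (A *ᵥ s))
            = r ⬝ᵥ r - 2 * t * ((A *ᵥ s) ⬝ᵥ r) + ((A *ᵥ s) ⬝ᵥ (A *ᵥ s)) * (t * t) := by
          simp only [dotProduct_sub, sub_dotProduct, dotProduct_smul, smul_dotProduct,
            smul_eq_mul, dotProduct_comm r (A *ᵥ s)]
          ring
        have e3 : (A *ᵥ s) ⬝ᵥ r = s ⬝ᵥ s := by
          rw [dotProduct_comm, dotProduct_mulVec, ← mulVec_transpose]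
        rw [e2, e3] at h1
        linarith
      have hd := discrim_le_zero key
      rw [discrim] at hd
      have hsnn : 0 ≤ s ⬝ᵥ s := by
        apply Finset.sum_nonneg; intro i _; exact mul_self_nonneg _
      nlinarith [hd, hsnn]
    have hs0 : s = 0 := dotProduct_self_eq_zero.mp hss
    have hsub : Aᵀ *ᵥ (A *ᵥ xstar) - Aᵀ *ᵥ b = 0 := by
      rw [← mulVec_sub]; exact hs0
    rw [hG, ← mulVec_mulVec]
    exact sub_eq_zero.mp hsub
  -- error recursion
  have herr : ∀ k, x (k + 1) - xstar
      = (x k - xstar) - M⁻¹ *ᵥ (G *ᵥ (x k - xstar)) := by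
    intro k
    rw [hiter k]
    have e1 : G *ᵥ x k - Aᵀ *ᵥ b = G *ᵥ (x k - xstar) := by
      rw [mulVec_sub, hnorm]
    rw [e1]
    abel
  -- one-step contraction at the level of quadratic forms
  have hGc : ∀ v : Fin d → ℝ, c * (v ⬝ᵥ M *ᵥ v) ≤ v ⬝ᵥ G *ᵥ v := by
    intro v
    have h5 : c * (v ⬝ᵥ M *ᵥ v) ≤ c * (lam * (v ⬝ᵥ G *ᵥ v)) :=
      mul_le_mul_of_nonneg_left (hhigh' v) hc0.le
    have h6 : c * (lam * (v ⬝ᵥ G *ᵥ v)) = v ⬝ᵥ G *ᵥ v := by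
      rw [← mul_assoc, hclam, one_mul]
    linarith
  have hstep : ∀ e : Fin d → ℝ,
      (e - M⁻¹ *ᵥ (G *ᵥ e)) ⬝ᵥ M *ᵥ (e - M⁻¹ *ᵥ (G *ᵥ e))
        ≤ (1 - c) ^ 2 * (e ⬝ᵥ M *ᵥ e) :=
    stmt14_step M G c hc0 hc1 hMs hGs hMMinv hMinvM hMinvs hMinvPSD hlow' hGc
  -- induction
  intro k
  induction k with
  | zero => simp
  | succ k ih =>
    have hq := hstep (x k - xstar)
    rw [← herr k] at hq
    have hs2 : Real.sqrt ((1 - c) ^ 2 * ((x k - xstar) ⬝ᵥ M *ᵥ (x k - xstar)))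
        = (1 - c) * Real.sqrt ((x k - xstar) ⬝ᵥ M *ᵥ (x k - xstar)) := by
      rw [Real.sqrt_mul (sq_nonneg _), Real.sqrt_sq (by linarith : (0:ℝ) ≤ 1 - c)]
    calc Real.sqrt ((x (k + 1) - xstar) ⬝ᵥ M *ᵥ (x (k + 1) - xstar))
        ≤ (1 - c) * Real.sqrt ((x k - xstar) ⬝ᵥ M *ᵥ (x k - xstar)) := by
          rw [← hs2]; exact Real.sqrt_le_sqrt hq
      _ ≤ (1 - c) * ((1 - c) ^ k * Real.sqrt ((x 0 - xstar) ⬝ᵥ M *ᵥ (x 0 - xstar))) :=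
          mul_le_mul_of_nonneg_left ih (by linarith)
      _ = (1 - c) ^ (k + 1) * Real.sqrt ((x 0 - xstar) ⬝ᵥ M *ᵥ (x 0 - xstar)) := by ring
end
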